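/- arXiv:2411.07484 — 6 statements merged into one kernel-verified Lean document; each statement's English description precedes it below -/
import Mathlib

section
/- Let J : ℝⁿ × ℝᵐ × ℝᵈ → ℝ, write z = (x, u, θ) with the Euclidean product norm. Assume: (i) J is twice continuously differentiable; (ii) for each fixed (x, θ), the map u ↦ J(x, u, θ) is μ-strongly convex with μ > 0; (iii) ∇_z J is L₁-Lipschitz; (iv) the mixed derivative z ↦ ∇_θ∇_u J(z) is L₂-Lipschitz; (v) the Hessian z ↦ ∇²_u J(z) is L₃-Lipschitz. Fix x and let u* : ℝᵈ → ℝᵐ be differentiable with ∇_u J(x, u*(θ), θ) = 0 for all θ. Then the derivative map θ ↦ D u*(θ) is Lipschitz with constant L₂/μ + (L₁L₂ + L₁L₃)/μ² + L₁²L₃/μ³, that is, ‖D u*(θ) − D u*(θ')‖ ≤ (L₂/μ + (L₁L₂ + L₁L₃)/μ² + L₁²L₃/μ³)‖θ − θ'‖ for all θ, θ'. -/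
/-- The product space `z = (x, u, θ)` equipped with the Euclidean (ℓ²) product norm. -/
abbrev DiffOP.Zspace (n m d : ℕ) : Type :=
  WithLp 2 (EuclideanSpace ℝ (Fin n) ×
    WithLp 2 (EuclideanSpace ℝ (Fin m) × EuclideanSpace ℝ (Fin d)))

/-- Packaging `(x, u, θ)` as a point of the Euclidean product space. -/
noncomputable def DiffOP.mkz {n m d : ℕ} (x : EuclideanSpace ℝ (Fin n))
    (u : EuclideanSpace ℝ (Fin m)) (θ : EuclideanSpace ℝ (Fin d)) : DiffOP.Zspace n m d :=
  (WithLp.equiv 2 _).symm (x, (WithLp.equiv 2 _).symm (u, θ))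

/-- The `x`-component of `z`. -/
def DiffOP.zx {n m d : ℕ} (z : DiffOP.Zspace n m d) : EuclideanSpace ℝ (Fin n) :=
  (WithLp.equiv 2 _ z).1

/-- The `u`-component of `z`. -/
def DiffOP.zu {n m d : ℕ} (z : DiffOP.Zspace n m d) : EuclideanSpace ℝ (Fin m) :=
  (WithLp.equiv 2 _ (WithLp.equiv 2 _ z).2).1

/-- The `θ`-component of `z`. -/
def DiffOP.zθ {n m d : ℕ} (z : DiffOP.Zspace n m d) : EuclideanSpace ℝ (Fin d) :=
  (WithLp.equiv 2 _ (WithLp.equiv 2 _ z).2).2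


open scoped RealInnerProductSpace

namespace DiffOPAux
open DiffOP



variable {n m d : ℕ}



lemma mkz_sub (x x' : EuclideanSpace ℝ (Fin n)) (u u' : EuclideanSpace ℝ (Fin m))
    (θ θ' : EuclideanSpace ℝ (Fin d)) :
    mkz x u θ - mkz x' u' θ' = mkz (x - x') (u - u') (θ - θ') := rfl

lemma mkz_add (x x' : EuclideanSpace ℝ (Fin n)) (u u' : EuclideanSpace ℝ (Fin m))
    (θ θ' : EuclideanSpace ℝ (Fin d)) :
    mkz x u θ + mkz x' u' θ' = mkz (x + x') (u + u') (θ + θ') := rfl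

lemma inner_mkz (a x : EuclideanSpace ℝ (Fin n)) (b u : EuclideanSpace ℝ (Fin m))
    (c θ : EuclideanSpace ℝ (Fin d)) :
    ⟪mkz a b c, mkz x u θ⟫ = ⟪a, x⟫ + (⟪b, u⟫ + ⟪c, θ⟫) := by
  simp only [mkz, WithLp.prod_inner_apply]
  rfl

lemma mkz_eta (z : WithLp 2 (EuclideanSpace ℝ (Fin n) ×
      WithLp 2 (EuclideanSpace ℝ (Fin m) × EuclideanSpace ℝ (Fin d)))) :
    mkz (WithLp.equiv 2 _ z).1 (zu z) (WithLp.equiv 2 _ (WithLp.equiv 2 _ z).2).2 = z := rfl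

lemma norm_mkz_sq (x : EuclideanSpace ℝ (Fin n)) (u : EuclideanSpace ℝ (Fin m))
    (θ : EuclideanSpace ℝ (Fin d)) :
    ‖mkz x u θ‖ ^ 2 = ‖x‖ ^ 2 + ‖u‖ ^ 2 + ‖θ‖ ^ 2 := by
  have h := inner_mkz x x u u θ θ
  rw [real_inner_self_eq_norm_sq, real_inner_self_eq_norm_sq, real_inner_self_eq_norm_sq,
    real_inner_self_eq_norm_sq] at h
  linarith

lemma norm_mkz_00θ (θ : EuclideanSpace ℝ (Fin d)) :
    ‖mkz (0 : EuclideanSpace ℝ (Fin n)) (0 : EuclideanSpace ℝ (Fin m)) θ‖ = ‖θ‖ := by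
  have h := norm_mkz_sq (0 : EuclideanSpace ℝ (Fin n)) (0 : EuclideanSpace ℝ (Fin m)) θ
  simp only [norm_zero] at h
  nlinarith [norm_nonneg (mkz (0 : EuclideanSpace ℝ (Fin n)) (0 : EuclideanSpace ℝ (Fin m)) θ),
    norm_nonneg θ]

lemma norm_mkz_le (u : EuclideanSpace ℝ (Fin m)) (θ : EuclideanSpace ℝ (Fin d)) :
    ‖mkz (0 : EuclideanSpace ℝ (Fin n)) u θ‖ ≤ ‖u‖ + ‖θ‖ := by
  have h := norm_mkz_sq (0 : EuclideanSpace ℝ (Fin n)) u θ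
  simp only [norm_zero] at h
  nlinarith [norm_nonneg (mkz (0 : EuclideanSpace ℝ (Fin n)) u θ), norm_nonneg u, norm_nonneg θ,
    mul_nonneg (norm_nonneg u) (norm_nonneg θ)]

lemma norm_zu_le (z : WithLp 2 (EuclideanSpace ℝ (Fin n) ×
      WithLp 2 (EuclideanSpace ℝ (Fin m) × EuclideanSpace ℝ (Fin d)))) :
    ‖zu z‖ ≤ ‖z‖ := by
  have h : ‖z‖ ^ 2 = ‖(WithLp.equiv 2 _ z).1‖ ^ 2 + ‖zu z‖ ^ 2
      + ‖(WithLp.equiv 2 _ (WithLp.equiv 2 _ z).2).2‖ ^ 2 := by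
    conv_lhs => rw [← mkz_eta z]
    exact norm_mkz_sq _ _ _
  nlinarith [norm_nonneg z, norm_nonneg (zu z), sq_nonneg ‖(WithLp.equiv 2 _ z).1‖,
    sq_nonneg ‖(WithLp.equiv 2 _ (WithLp.equiv 2 _ z).2).2‖]

variable {n m d : ℕ}

noncomputable def iota (n m d : ℕ) :
    (EuclideanSpace ℝ (Fin m) × EuclideanSpace ℝ (Fin d)) →L[ℝ]
      WithLp 2 (EuclideanSpace ℝ (Fin n) ×
        WithLp 2 (EuclideanSpace ℝ (Fin m) × EuclideanSpace ℝ (Fin d))) :=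
  ((WithLp.prodContinuousLinearEquiv 2 ℝ (EuclideanSpace ℝ (Fin n))
      (WithLp 2 (EuclideanSpace ℝ (Fin m) × EuclideanSpace ℝ (Fin d)))).symm.toContinuousLinearMap).comp
    ((ContinuousLinearMap.inr ℝ (EuclideanSpace ℝ (Fin n))
        (WithLp 2 (EuclideanSpace ℝ (Fin m) × EuclideanSpace ℝ (Fin d)))).comp
      ((WithLp.prodContinuousLinearEquiv 2 ℝ (EuclideanSpace ℝ (Fin m))
        (EuclideanSpace ℝ (Fin d))).symm.toContinuousLinearMap))

example (u : EuclideanSpace ℝ (Fin m)) (θ : EuclideanSpace ℝ (Fin d)) :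
    iota n m d (u, θ) = DiffOP.mkz 0 u θ := rfl

noncomputable def zuCLM (n m d : ℕ) :
    (WithLp 2 (EuclideanSpace ℝ (Fin n) ×
      WithLp 2 (EuclideanSpace ℝ (Fin m) × EuclideanSpace ℝ (Fin d)))) →L[ℝ]
      EuclideanSpace ℝ (Fin m) :=
  (ContinuousLinearMap.fst ℝ (EuclideanSpace ℝ (Fin m)) (EuclideanSpace ℝ (Fin d))).comp
    (((WithLp.prodContinuousLinearEquiv 2 ℝ (EuclideanSpace ℝ (Fin m))
        (EuclideanSpace ℝ (Fin d))).toContinuousLinearMap).comp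
      ((ContinuousLinearMap.snd ℝ (EuclideanSpace ℝ (Fin n))
          (WithLp 2 (EuclideanSpace ℝ (Fin m) × EuclideanSpace ℝ (Fin d)))).comp
        ((WithLp.prodContinuousLinearEquiv 2 ℝ (EuclideanSpace ℝ (Fin n))
          (WithLp 2 (EuclideanSpace ℝ (Fin m) ×
            EuclideanSpace ℝ (Fin d)))).toContinuousLinearMap)))

example (z : WithLp 2 (EuclideanSpace ℝ (Fin n) ×
      WithLp 2 (EuclideanSpace ℝ (Fin m) × EuclideanSpace ℝ (Fin d)))) :
    zuCLM n m d z = DiffOP.zu z := rfl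

variable {n m d : ℕ}

section
variable (J : WithLp 2 (EuclideanSpace ℝ (Fin n) ×
    WithLp 2 (EuclideanSpace ℝ (Fin m) × EuclideanSpace ℝ (Fin d))) → ℝ)
  (x : EuclideanSpace ℝ (Fin n))

lemma grad_comp (hJ : ContDiff ℝ 2 J) (θ : EuclideanSpace ℝ (Fin d))
    (v : EuclideanSpace ℝ (Fin m)) :
    gradient (fun w => J (DiffOP.mkz x w θ)) v
      = zuCLM n m d (gradient J (DiffOP.mkz x v θ)) := by
  set z := DiffOP.mkz x v θ with hz
  have hd : DifferentiableAt ℝ J z := (hJ.differentiable two_ne_zero).differentiableAt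
  have hg : HasFDerivAt J ((InnerProductSpace.toDual ℝ _) (gradient J z)) z :=
    hasGradientAt_iff_hasFDerivAt.mp hd.hasGradientAt
  have hfun : (fun w => DiffOP.mkz x w θ)
      =ᶠ[nhds v] fun w => DiffOP.mkz x 0 θ + (iota n m d) (w, 0) := by
    refine Filter.Eventually.of_forall fun w => ?_
    show DiffOP.mkz x w θ = DiffOP.mkz x 0 θ + DiffOP.mkz 0 w 0
    rw [mkz_add]; simp
  have he : HasFDerivAt (fun w => DiffOP.mkz x w θ)
      ((iota n m d).comp (ContinuousLinearMap.inl ℝ (EuclideanSpace ℝ (Fin m))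
        (EuclideanSpace ℝ (Fin d)))) v := by
    have h1 : HasFDerivAt (fun w => DiffOP.mkz x 0 θ + (iota n m d) (w, 0))
        ((iota n m d).comp (ContinuousLinearMap.inl ℝ _ _)) v :=
      (((iota n m d).comp (ContinuousLinearMap.inl ℝ _ _)).hasFDerivAt).const_add _
    exact h1.congr_of_eventuallyEq hfun
  have hc : HasFDerivAt (fun w => J (DiffOP.mkz x w θ))
      (((InnerProductSpace.toDual ℝ _) (gradient J z)).comp
        ((iota n m d).comp (ContinuousLinearMap.inl ℝ _ _))) v := hg.comp v he
  have hkey : (((InnerProductSpace.toDual ℝ _) (gradient J z)).comp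
        ((iota n m d).comp (ContinuousLinearMap.inl ℝ (EuclideanSpace ℝ (Fin m))
          (EuclideanSpace ℝ (Fin d)))))
      = (InnerProductSpace.toDual ℝ _) (zuCLM n m d (gradient J z)) := by
    ext w
    have h2 : (iota n m d) ((ContinuousLinearMap.inl ℝ (EuclideanSpace ℝ (Fin m))
        (EuclideanSpace ℝ (Fin d))) w) = DiffOP.mkz 0 w 0 := rfl
    simp only [ContinuousLinearMap.coe_comp', Function.comp_apply,
      InnerProductSpace.toDual_apply_apply]
    rw [h2]
    conv_lhs => rw [← mkz_eta (gradient J z)]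
    rw [inner_mkz]
    show (inner ℝ _ 0 + (inner ℝ (zuCLM n m d (gradient J z)) w + inner ℝ _ 0) : ℝ) = _
    simp
  rw [hkey] at hc
  simpa using (hasFDerivAt_iff_hasGradientAt.mp hc).gradient

noncomputable def Gmap : EuclideanSpace ℝ (Fin m) × EuclideanSpace ℝ (Fin d)
    → EuclideanSpace ℝ (Fin m) :=
  fun p => zuCLM n m d (gradient J (DiffOP.mkz x p.1 p.2))

lemma contDiff_G (hJ : ContDiff ℝ 2 J) : ContDiff ℝ 1 (Gmap J x) := by
  have h1 : ContDiff ℝ 1 (fderiv ℝ J) := hJ.fderiv_right (by norm_num)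
  have h2 : ContDiff ℝ 1 (gradient J) := by
    have h3 : gradient J = fun z => (InnerProductSpace.toDual ℝ _).symm (fderiv ℝ J z) := rfl
    rw [h3]
    exact ((InnerProductSpace.toDual ℝ _).symm.contDiff.of_le le_top).comp h1
  have h4 : ContDiff ℝ 1 (fun p : EuclideanSpace ℝ (Fin m) × EuclideanSpace ℝ (Fin d) =>
      DiffOP.mkz x p.1 p.2) := by
    have h5 : (fun p : EuclideanSpace ℝ (Fin m) × EuclideanSpace ℝ (Fin d) =>
        DiffOP.mkz x p.1 p.2) = fun p => DiffOP.mkz x 0 0 + (iota n m d) p := by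
      funext p
      show DiffOP.mkz x p.1 p.2 = DiffOP.mkz x 0 0 + DiffOP.mkz 0 p.1 p.2
      rw [mkz_add]; simp
    rw [h5]
    exact contDiff_const.add (iota n m d).contDiff
  exact ((zuCLM n m d).contDiff).comp (h2.comp h4)

end
variable {n m d : ℕ}

section
variable (J : WithLp 2 (EuclideanSpace ℝ (Fin n) ×
    WithLp 2 (EuclideanSpace ℝ (Fin m) × EuclideanSpace ℝ (Fin d))) → ℝ)
  (x : EuclideanSpace ℝ (Fin n))

lemma hasFDerivAt_mkzfun (θ : EuclideanSpace ℝ (Fin d)) (v : EuclideanSpace ℝ (Fin m)) :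
    HasFDerivAt (fun w => DiffOP.mkz x w θ)
      ((iota n m d).comp (ContinuousLinearMap.inl ℝ (EuclideanSpace ℝ (Fin m))
        (EuclideanSpace ℝ (Fin d)))) v := by
  have hfun : (fun w => DiffOP.mkz x w θ)
      =ᶠ[nhds v] fun w => DiffOP.mkz x 0 θ + (iota n m d) (w, 0) := by
    refine Filter.Eventually.of_forall fun w => ?_
    show DiffOP.mkz x w θ = DiffOP.mkz x 0 θ + DiffOP.mkz 0 w 0
    rw [mkz_add]; simp
  have h1 : HasFDerivAt (fun w => DiffOP.mkz x 0 θ + (iota n m d) (w, 0))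
      ((iota n m d).comp (ContinuousLinearMap.inl ℝ _ _)) v :=
    (((iota n m d).comp (ContinuousLinearMap.inl ℝ _ _)).hasFDerivAt).const_add _
  exact h1.congr_of_eventuallyEq hfun

lemma hasDerivAt_line (J) (hJ : ContDiff ℝ 2 J) (θ : EuclideanSpace ℝ (Fin d))
    (c : ℝ → EuclideanSpace ℝ (Fin m)) (dd : EuclideanSpace ℝ (Fin m)) (s : ℝ)
    (hc : HasDerivAt c dd s) :
    HasDerivAt (fun t => J (DiffOP.mkz x (c t) θ))
      (⟪Gmap J x (c s, θ), dd⟫) s := by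
  have hdJ : DifferentiableAt ℝ J (DiffOP.mkz x (c s) θ) :=
    (hJ.differentiable two_ne_zero).differentiableAt
  have hdiff₁ : DifferentiableAt ℝ (fun w => J (DiffOP.mkz x w θ)) (c s) :=
    hdJ.comp (c s) (hasFDerivAt_mkzfun x θ (c s)).differentiableAt
  have hgr : HasGradientAt (fun w => J (DiffOP.mkz x w θ)) (Gmap J x (c s, θ)) (c s) := by
    have := hdiff₁.hasGradientAt
    rwa [grad_comp J x hJ θ (c s)] at this
  have hF : HasFDerivAt (fun w => J (DiffOP.mkz x w θ))
      ((InnerProductSpace.toDual ℝ _) (Gmap J x (c s, θ))) (c s) :=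
    hasGradientAt_iff_hasFDerivAt.mp hgr
  have := hF.comp_hasDerivAt s hc
  simpa [InnerProductSpace.toDual_apply_apply, Function.comp_def] using this

lemma grad_mono {μ : ℝ} (hJ : ContDiff ℝ 2 J) (θ : EuclideanSpace ℝ (Fin d))
    (hconv : ConvexOn ℝ Set.univ (fun u => J (DiffOP.mkz x u θ) - μ / 2 * ‖u‖ ^ 2))
    (a b : EuclideanSpace ℝ (Fin m)) :
    μ * ‖a - b‖ ^ 2 ≤ ⟪Gmap J x (a, θ) - Gmap J x (b, θ), a - b⟫ := by
  set dd := a - b with hdd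
  set c : ℝ → EuclideanSpace ℝ (Fin m) := fun s => s • dd + b with hcdef
  have hc : ∀ s : ℝ, HasDerivAt c dd s := fun s => by
    simpa [hcdef] using ((hasDerivAt_id s).smul_const dd).add_const b
  set φ : ℝ → ℝ := fun s => J (DiffOP.mkz x (c s) θ) - μ / 2 * ⟪c s, c s⟫ with hφdef
  have hφconv : ConvexOn ℝ Set.univ φ := by
    have h1 := hconv.comp_affineMap (AffineMap.lineMap b a : ℝ →ᵃ[ℝ] EuclideanSpace ℝ (Fin m))
    have h2 : ((fun u => J (DiffOP.mkz x u θ) - μ / 2 * ‖u‖ ^ 2) ∘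
        (AffineMap.lineMap b a : ℝ →ᵃ[ℝ] EuclideanSpace ℝ (Fin m))) = φ := by
      funext s
      simp only [Function.comp_apply, AffineMap.lineMap_apply_module', hφdef, hcdef,
        real_inner_self_eq_norm_sq, ← hdd]
    rw [h2] at h1
    simpa using h1
  have hder : ∀ s : ℝ, HasDerivAt φ
      (⟪Gmap J x (c s, θ), dd⟫ - μ / 2 * (⟪c s, dd⟫ + ⟪dd, c s⟫)) s := by
    intro s
    exact (hasDerivAt_line x J hJ θ c dd s (hc s)).sub
      ((HasDerivAt.inner ℝ (hc s) (hc s)).const_mul (μ / 2))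
  have hmono := hφconv.monotoneOn_deriv (fun s _ => (hder s).differentiableAt)
  have h01 := hmono (Set.mem_univ (0:ℝ)) (Set.mem_univ (1:ℝ)) zero_le_one
  rw [(hder 0).deriv, (hder 1).deriv] at h01
  have hc0 : c 0 = b := by simp [hcdef]
  have hc1 : c 1 = a := by simp [hcdef, hdd]
  rw [hc0, hc1] at h01
  have h1 : ⟪dd, a⟫ = ⟪a, dd⟫ := real_inner_comm a dd
  have h2 : ⟪dd, b⟫ = ⟪b, dd⟫ := real_inner_comm b dd
  rw [h1, h2] at h01
  have hexp : ⟪Gmap J x (a, θ) - Gmap J x (b, θ), dd⟫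
      = ⟪Gmap J x (a, θ), dd⟫ - ⟪Gmap J x (b, θ), dd⟫ := inner_sub_left _ _ _
  have hdd2 : ⟪a, dd⟫ - ⟪b, dd⟫ = ‖dd‖ ^ 2 := by
    rw [← inner_sub_left, ← hdd, real_inner_self_eq_norm_sq]
  have h3 : μ * (⟪a, dd⟫ - ⟪b, dd⟫) = μ * ‖dd‖ ^ 2 := by rw [hdd2]
  rw [hexp]
  nlinarith [h01, h3]
end
variable {n m d : ℕ}

section
variable (J : WithLp 2 (EuclideanSpace ℝ (Fin n) ×
    WithLp 2 (EuclideanSpace ℝ (Fin m) × EuclideanSpace ℝ (Fin d))) → ℝ)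
  (x : EuclideanSpace ℝ (Fin n))

lemma coercive {μ : ℝ} (hJ : ContDiff ℝ 2 J) (θ : EuclideanSpace ℝ (Fin d))
    (hconv : ConvexOn ℝ Set.univ (fun u => J (DiffOP.mkz x u θ) - μ / 2 * ‖u‖ ^ 2))
    (u v : EuclideanSpace ℝ (Fin m)) :
    μ * ‖v‖ ^ 2 ≤ ⟪fderiv ℝ (Gmap J x) (u, θ) (v, 0), v⟫ := by
  set c : ℝ → EuclideanSpace ℝ (Fin m) := fun s => s • v + u with hcdef
  have hc : HasDerivAt c v 0 := by
    simpa [hcdef] using ((hasDerivAt_id (0:ℝ)).smul_const v).add_const u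
  have hDG : HasFDerivAt (Gmap J x) (fderiv ℝ (Gmap J x) (u, θ)) (u, θ) :=
    (((contDiff_G J x hJ).differentiable one_ne_zero) (u, θ)).hasFDerivAt
  have hc0 : c 0 = u := by simp [hcdef]
  have hpair : HasDerivAt (fun s => (c s, θ)) (v, (0 : EuclideanSpace ℝ (Fin d))) 0 :=
    hc.prodMk (hasDerivAt_const 0 θ)
  have hline : HasDerivAt (fun s => Gmap J x (c s, θ)) (fderiv ℝ (Gmap J x) (u, θ) (v, 0)) 0 := by
    have hDG' : HasFDerivAt (Gmap J x) (fderiv ℝ (Gmap J x) (u, θ)) (c 0, θ) := by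
      rw [hc0]; exact hDG
    exact hDG'.comp_hasDerivAt 0 hpair
  rw [hasDerivAt_iff_tendsto_slope] at hline
  have hT : Filter.Tendsto (fun s => (⟪slope (fun s => Gmap J x (c s, θ)) 0 s, v⟫ : ℝ))
      (nhdsWithin 0 (Set.Ioi 0)) (nhds ⟪fderiv ℝ (Gmap J x) (u, θ) (v, 0), v⟫) :=
    (Filter.Tendsto.inner (hline.mono_left
        (nhdsWithin_mono 0 (fun s hs => Set.mem_compl_singleton_iff.mpr (ne_of_gt hs))))
      tendsto_const_nhds)
  refine ge_of_tendsto hT ?_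
  refine eventually_nhdsWithin_of_forall fun s hs => ?_
  have hspos : (0:ℝ) < s := hs
  have hmono := grad_mono J x hJ θ hconv (c s) u
  have hcsub : c s - u = s • v := by simp [hcdef]
  rw [hcsub] at hmono
  have hnorm : ‖s • v‖ ^ 2 = s ^ 2 * ‖v‖ ^ 2 := by
    rw [norm_smul, Real.norm_eq_abs, mul_pow, sq_abs]
  have hinner : ⟪Gmap J x (c s, θ) - Gmap J x (u, θ), s • v⟫
      = s * ⟪Gmap J x (c s, θ) - Gmap J x (u, θ), v⟫ := real_inner_smul_right _ _ _
  rw [hnorm, hinner] at hmono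
  have hslope : slope (fun s => Gmap J x (c s, θ)) 0 s
      = s⁻¹ • (Gmap J x (c s, θ) - Gmap J x (u, θ)) := by
    rw [slope_def_module, sub_zero, hc0]
  rw [hslope, real_inner_smul_left, le_inv_mul_iff₀ hspos]
  nlinarith [hmono, hspos]
end

end DiffOPAux

open DiffOPAux
/-- Second bullet of Lemma 1: under (i) twice continuous
differentiability, (ii) `μ`-strong convexity in `u`, (iii) `L₁`-Lipschitz total gradient
`∇_z J`, (iv) `L₂`-Lipschitz mixed derivative `∇_θ∇_u J`, (v) `L₃`-Lipschitz Hessian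
`∇²_u J`, the derivative of the implicit solution map `θ ↦ D u*(θ)` is Lipschitz with
constant `L₂/μ + (L₁L₂ + L₁L₃)/μ² + L₁²L₃/μ³`. -/
theorem solution_map_derivative_lipschitz
    {n m d : ℕ} {μ L₁ L₂ L₃ : ℝ} (hμ : 0 < μ)
    (J : DiffOP.Zspace n m d → ℝ)
    (hJ : ContDiff ℝ 2 J)
    (hconv : ∀ (x : EuclideanSpace ℝ (Fin n)) (θ : EuclideanSpace ℝ (Fin d)),
      ConvexOn ℝ Set.univ (fun u => J (DiffOP.mkz x u θ) - μ / 2 * ‖u‖ ^ 2))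
    (hgradLip : ∀ z z' : DiffOP.Zspace n m d,
      ‖gradient J z - gradient J z'‖ ≤ L₁ * ‖z - z'‖)
    (M : DiffOP.Zspace n m d → (EuclideanSpace ℝ (Fin d) →L[ℝ] EuclideanSpace ℝ (Fin m)))
    (hMdef : ∀ z, M z =
      fderiv ℝ (fun t => gradient (fun v => J (DiffOP.mkz (DiffOP.zx z) v t)) (DiffOP.zu z))
        (DiffOP.zθ z))
    (hMLip : ∀ z z', ‖M z - M z'‖ ≤ L₂ * ‖z - z'‖)
    (H : DiffOP.Zspace n m d → (EuclideanSpace ℝ (Fin m) →L[ℝ] EuclideanSpace ℝ (Fin m)))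
    (hHdef : ∀ z, H z =
      fderiv ℝ (fun v => gradient (fun w => J (DiffOP.mkz (DiffOP.zx z) w (DiffOP.zθ z))) v)
        (DiffOP.zu z))
    (hHLip : ∀ z z', ‖H z - H z'‖ ≤ L₃ * ‖z - z'‖)
    (x : EuclideanSpace ℝ (Fin n))
    (ustar : EuclideanSpace ℝ (Fin d) → EuclideanSpace ℝ (Fin m))
    (hustar : Differentiable ℝ ustar)
    (hstat : ∀ θ, gradient (fun u => J (DiffOP.mkz x u θ)) (ustar θ) = 0) :
    ∀ θ θ', ‖fderiv ℝ ustar θ - fderiv ℝ ustar θ'‖ ≤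
      (L₂ / μ + (L₁ * L₂ + L₁ * L₃) / μ ^ 2 + L₁ ^ 2 * L₃ / μ ^ 3) * ‖θ - θ'‖ := by
  intro θ θ'
  by_cases hθθ : θ = θ'
  · subst hθθ; simp
  have hθpos : 0 < ‖θ - θ'‖ := by
    rw [norm_sub_pos_iff]; exact hθθ
  -- the distance between `z`-points sharing `x, u` components
  have hz00 : ∀ t t' : EuclideanSpace ℝ (Fin d),
      ‖(DiffOP.mkz (0 : EuclideanSpace ℝ (Fin n)) (0 : EuclideanSpace ℝ (Fin m)) t)
        - DiffOP.mkz 0 0 t'‖ = ‖t - t'‖ := by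
    intro t t'
    rw [mkz_sub, sub_self, sub_self, norm_mkz_00θ]
  -- nonnegativity of the Lipschitz constants
  have hL1 : 0 ≤ L₁ := by
    have h := hgradLip (DiffOP.mkz 0 0 θ) (DiffOP.mkz 0 0 θ')
    rw [hz00] at h
    by_contra hneg
    have hneg' : L₁ < 0 := lt_of_not_ge hneg
    have : L₁ * ‖θ - θ'‖ < 0 := mul_neg_of_neg_of_pos hneg' hθpos
    linarith [norm_nonneg (gradient J (DiffOP.mkz (0 : EuclideanSpace ℝ (Fin n)) 0 θ)
      - gradient J (DiffOP.mkz 0 0 θ'))]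
  have hL2 : 0 ≤ L₂ := by
    have h := hMLip (DiffOP.mkz 0 0 θ) (DiffOP.mkz 0 0 θ')
    rw [hz00] at h
    by_contra hneg
    have hneg' : L₂ < 0 := lt_of_not_ge hneg
    have : L₂ * ‖θ - θ'‖ < 0 := mul_neg_of_neg_of_pos hneg' hθpos
    linarith [norm_nonneg (M (DiffOP.mkz (0 : EuclideanSpace ℝ (Fin n)) 0 θ)
      - M (DiffOP.mkz 0 0 θ'))]
  have hL3 : 0 ≤ L₃ := by
    have h := hHLip (DiffOP.mkz 0 0 θ) (DiffOP.mkz 0 0 θ')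
    rw [hz00] at h
    by_contra hneg
    have hneg' : L₃ < 0 := lt_of_not_ge hneg
    have : L₃ * ‖θ - θ'‖ < 0 := mul_neg_of_neg_of_pos hneg' hθpos
    linarith [norm_nonneg (H (DiffOP.mkz (0 : EuclideanSpace ℝ (Fin n)) 0 θ)
      - H (DiffOP.mkz 0 0 θ'))]
  set Du : EuclideanSpace ℝ (Fin d) → (EuclideanSpace ℝ (Fin d) →L[ℝ] EuclideanSpace ℝ (Fin m)) :=
    fun t => fderiv ℝ ustar t with hDu
  set zmap : EuclideanSpace ℝ (Fin d) → DiffOP.Zspace n m d :=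
    fun t => DiffOP.mkz x (ustar t) t with hzmap
  -- the stationarity in terms of `Gmap`
  have hstat0 : ∀ t, Gmap J x (ustar t, t) = 0 := fun t =>
    (grad_comp J x hJ t (ustar t)).symm.trans (hstat t)
  have hGdiff : ∀ p, HasFDerivAt (Gmap J x) (fderiv ℝ (Gmap J x) p) p := fun p =>
    (((contDiff_G J x hJ).differentiable one_ne_zero) p).hasFDerivAt
  -- chain rule for the stationarity equation
  have hchain : ∀ t (w : EuclideanSpace ℝ (Fin d)),
      fderiv ℝ (Gmap J x) (ustar t, t) (Du t w, w) = 0 := by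
    intro t w
    have hu : HasFDerivAt ustar (Du t) t := (hustar t).hasFDerivAt
    have hp : HasFDerivAt (fun s => (ustar s, s))
        ((Du t).prod (ContinuousLinearMap.id ℝ _)) t := hu.prodMk (hasFDerivAt_id t)
    have hF : HasFDerivAt (fun s => Gmap J x (ustar s, s))
        ((fderiv ℝ (Gmap J x) (ustar t, t)).comp
          ((Du t).prod (ContinuousLinearMap.id ℝ _))) t :=
      HasFDerivAt.comp (g := Gmap J x) (f := fun s => (ustar s, s)) t (hGdiff _) hp
    have hzero : (fun s => Gmap J x (ustar s, s))
        = fun _ => (0 : EuclideanSpace ℝ (Fin m)) := funext hstat0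
    rw [hzero] at hF
    have huniq := hF.unique (hasFDerivAt_const 0 t)
    have happ := congrArg (fun L : EuclideanSpace ℝ (Fin d) →L[ℝ] EuclideanSpace ℝ (Fin m)
      => L w) huniq
    simpa using happ
  -- identification of H with the partial derivative of `Gmap` in `u`
  have hzH : ∀ t (w : EuclideanSpace ℝ (Fin m)),
      H (zmap t) w = fderiv ℝ (Gmap J x) (ustar t, t) (w, 0) := by
    intro t w
    have hrw : (fun v => gradient
          (fun w => J (DiffOP.mkz (DiffOP.zx (zmap t)) w (DiffOP.zθ (zmap t)))) v)
        = fun v => Gmap J x (v, t) := by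
      funext v
      exact grad_comp J x hJ t v
    have hv : HasFDerivAt (fun v : EuclideanSpace ℝ (Fin m) => (v, t))
        ((ContinuousLinearMap.id ℝ (EuclideanSpace ℝ (Fin m))).prod 0) (ustar t) :=
      (hasFDerivAt_id _).prodMk (hasFDerivAt_const t _)
    have hcomp : HasFDerivAt (fun v => Gmap J x (v, t))
        ((fderiv ℝ (Gmap J x) (ustar t, t)).comp
          ((ContinuousLinearMap.id ℝ (EuclideanSpace ℝ (Fin m))).prod 0)) (ustar t) :=
      HasFDerivAt.comp (g := Gmap J x) (f := fun v => (v, t)) _ (hGdiff _) hv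
    have hzu : DiffOP.zu (zmap t) = ustar t := rfl
    rw [hHdef (zmap t), hrw, hzu, hcomp.fderiv]
    rfl
  -- identification of M with the partial derivative of `Gmap` in `θ`
  have hzM : ∀ t (w : EuclideanSpace ℝ (Fin d)),
      M (zmap t) w = fderiv ℝ (Gmap J x) (ustar t, t) (0, w) := by
    intro t w
    have hrw : (fun s => gradient
          (fun v => J (DiffOP.mkz (DiffOP.zx (zmap t)) v s)) (DiffOP.zu (zmap t)))
        = fun s => Gmap J x (ustar t, s) := by
      funext s
      exact grad_comp J x hJ s (ustar t)
    have hv : HasFDerivAt (fun s : EuclideanSpace ℝ (Fin d) => ((ustar t), s))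
        ((0 : EuclideanSpace ℝ (Fin d) →L[ℝ] EuclideanSpace ℝ (Fin m)).prod
          (ContinuousLinearMap.id ℝ _)) t :=
      (hasFDerivAt_const _ _).prodMk (hasFDerivAt_id _)
    have hcomp : HasFDerivAt (fun s => Gmap J x (ustar t, s))
        ((fderiv ℝ (Gmap J x) (ustar t, t)).comp
          ((0 : EuclideanSpace ℝ (Fin d) →L[ℝ] EuclideanSpace ℝ (Fin m)).prod
            (ContinuousLinearMap.id ℝ _))) t :=
      HasFDerivAt.comp (g := Gmap J x) (f := fun s => (ustar t, s)) _ (hGdiff _) hv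
    have hzt : DiffOP.zθ (zmap t) = t := rfl
    rw [hMdef (zmap t), hrw, hzt, hcomp.fderiv]
    rfl
  -- the key pointwise relation `H (Du w) + M w = 0`
  have hrel : ∀ t (w : EuclideanSpace ℝ (Fin d)),
      H (zmap t) (Du t w) + M (zmap t) w = 0 := by
    intro t w
    rw [hzH t (Du t w), hzM t w, ← map_add]
    have : ((Du t w, (0 : EuclideanSpace ℝ (Fin d)))
        + ((0 : EuclideanSpace ℝ (Fin m)), w)) = (Du t w, w) := by simp
    rw [this]
    exact hchain t w
  -- coercivity of H along the solution path
  have hcoer : ∀ t (v : EuclideanSpace ℝ (Fin m)),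
      μ * ‖v‖ ^ 2 ≤ ⟪H (zmap t) v, v⟫ := by
    intro t v
    rw [hzH t v]
    exact coercive J x hJ t (hconv x t) (ustar t) v
  have hlower : ∀ t (v : EuclideanSpace ℝ (Fin m)), μ * ‖v‖ ≤ ‖H (zmap t) v‖ := by
    intro t v
    rcases eq_or_ne v 0 with rfl | hv
    · simp
    · have h1 := hcoer t v
      have h2 : ⟪H (zmap t) v, v⟫ ≤ ‖H (zmap t) v‖ * ‖v‖ := real_inner_le_norm _ _
      have hvpos : 0 < ‖v‖ := norm_pos_iff.mpr hv
      have h4 : μ * ‖v‖ * ‖v‖ = μ * ‖v‖ ^ 2 := by ring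
      have h5 : μ * ‖v‖ * ‖v‖ ≤ ‖H (zmap t) v‖ * ‖v‖ := by linarith
      exact le_of_mul_le_mul_right h5 hvpos
  -- the mixed partial derivative is bounded by L₁
  have hMbound : ∀ t, ‖M (zmap t)‖ ≤ L₁ := by
    intro t
    have hrw : (fun s => gradient
          (fun v => J (DiffOP.mkz (DiffOP.zx (zmap t)) v s)) (DiffOP.zu (zmap t)))
        = fun s => Gmap J x (ustar t, s) := by
      funext s
      exact grad_comp J x hJ s (ustar t)
    have hlip : LipschitzWith (Real.toNNReal L₁) (fun s => Gmap J x (ustar t, s)) := by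
      apply LipschitzWith.of_dist_le_mul
      intro s s'
      rw [dist_eq_norm, dist_eq_norm]
      have hGsub : Gmap J x (ustar t, s) - Gmap J x (ustar t, s')
          = DiffOP.zu (gradient J (DiffOP.mkz x (ustar t) s)
            - gradient J (DiffOP.mkz x (ustar t) s')) := by
        show zuCLM n m d _ - zuCLM n m d _ = _
        rw [← map_sub]
        rfl
      rw [hGsub]
      calc ‖DiffOP.zu (gradient J (DiffOP.mkz x (ustar t) s)
            - gradient J (DiffOP.mkz x (ustar t) s'))‖
          ≤ ‖gradient J (DiffOP.mkz x (ustar t) s)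
            - gradient J (DiffOP.mkz x (ustar t) s')‖ := norm_zu_le _
        _ ≤ L₁ * ‖DiffOP.mkz x (ustar t) s - DiffOP.mkz x (ustar t) s'‖ := hgradLip _ _
        _ = Real.toNNReal L₁ * ‖s - s'‖ := by
            rw [mkz_sub, sub_self, sub_self, norm_mkz_00θ, Real.coe_toNNReal L₁ hL1]
    have := norm_fderiv_le_of_lipschitz ℝ hlip (x₀ := t)
    rw [hMdef (zmap t), hrw]
    rw [Real.coe_toNNReal L₁ hL1] at this
    exact this
  -- bound on the derivative of the solution map
  have hDubound : ∀ t, ‖Du t‖ ≤ L₁ / μ := by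
    intro t
    refine ContinuousLinearMap.opNorm_le_bound _ (div_nonneg hL1 hμ.le) fun w => ?_
    have h1 : H (zmap t) (Du t w) = -(M (zmap t) w) := by
      have := hrel t w; linear_combination (norm := module) this
    have h2 : μ * ‖Du t w‖ ≤ ‖H (zmap t) (Du t w)‖ := hlower t (Du t w)
    rw [h1, norm_neg] at h2
    have h3 : ‖M (zmap t) w‖ ≤ L₁ * ‖w‖ :=
      le_trans (ContinuousLinearMap.le_opNorm _ _)
        (mul_le_mul_of_nonneg_right (hMbound t) (norm_nonneg w))
    rw [div_mul_eq_mul_div, le_div_iff₀ hμ]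
    have h4 : ‖(Du t) w‖ * μ = μ * ‖(Du t) w‖ := by ring
    linarith
  -- the solution map is Lipschitz
  have hustarLip : ‖ustar θ - ustar θ'‖ ≤ L₁ / μ * ‖θ - θ'‖ := by
    have := Convex.norm_image_sub_le_of_norm_fderiv_le
      (fun t (_ : t ∈ (Set.univ : Set (EuclideanSpace ℝ (Fin d)))) => hustar t)
      (fun t _ => hDubound t) convex_univ (Set.mem_univ θ') (Set.mem_univ θ)
    exact this
  -- distance between the `z`-points
  have hΔz : ‖zmap θ - zmap θ'‖ ≤ (L₁ / μ + 1) * ‖θ - θ'‖ := by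
    have h1 : zmap θ - zmap θ' = DiffOP.mkz 0 (ustar θ - ustar θ') (θ - θ') := by
      rw [hzmap]
      show DiffOP.mkz x (ustar θ) θ - DiffOP.mkz x (ustar θ') θ' = _
      rw [mkz_sub, sub_self]
    rw [h1]
    calc ‖DiffOP.mkz (0 : EuclideanSpace ℝ (Fin n)) (ustar θ - ustar θ') (θ - θ')‖
        ≤ ‖ustar θ - ustar θ'‖ + ‖θ - θ'‖ := norm_mkz_le _ _
      _ ≤ L₁ / μ * ‖θ - θ'‖ + ‖θ - θ'‖ := by linarith
      _ = (L₁ / μ + 1) * ‖θ - θ'‖ := by ring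
  -- final operator-norm estimate
  refine ContinuousLinearMap.opNorm_le_bound _ ?_ fun w => ?_
  · have : (0:ℝ) ≤ L₂ / μ + (L₁ * L₂ + L₁ * L₃) / μ ^ 2 + L₁ ^ 2 * L₃ / μ ^ 3 := by positivity
    exact mul_nonneg this hθpos.le
  have hkey : H (zmap θ) ((Du θ - Du θ') w)
      = (M (zmap θ') - M (zmap θ)) w + (H (zmap θ') - H (zmap θ)) (Du θ' w) := by
    have r1 : H (zmap θ) (Du θ w) = -(M (zmap θ) w) := by
      have := hrel θ w; linear_combination (norm := module) this
    have r2 : H (zmap θ') (Du θ' w) = -(M (zmap θ') w) := by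
      have := hrel θ' w; linear_combination (norm := module) this
    simp only [ContinuousLinearMap.sub_apply, map_sub]
    rw [r1, r2]
    abel
  have A : μ * ‖(Du θ - Du θ') w‖ ≤ ‖H (zmap θ) ((Du θ - Du θ') w)‖ := hlower θ _
  have B : ‖H (zmap θ) ((Du θ - Du θ') w)‖
      ≤ ‖M (zmap θ') - M (zmap θ)‖ * ‖w‖ + ‖H (zmap θ') - H (zmap θ)‖ * ‖Du θ' w‖ := by
    rw [hkey]
    refine le_trans (norm_add_le _ _) ?_
    gcongr
    · exact ContinuousLinearMap.le_opNorm _ _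
    · exact ContinuousLinearMap.le_opNorm _ _
  have C : ‖M (zmap θ') - M (zmap θ)‖ ≤ L₂ * ‖zmap θ - zmap θ'‖ := by
    have := hMLip (zmap θ') (zmap θ)
    rwa [norm_sub_rev (zmap θ') (zmap θ)] at this
  have D : ‖H (zmap θ') - H (zmap θ)‖ ≤ L₃ * ‖zmap θ - zmap θ'‖ := by
    have := hHLip (zmap θ') (zmap θ)
    rwa [norm_sub_rev (zmap θ') (zmap θ)] at this
  have E : ‖Du θ' w‖ ≤ L₁ / μ * ‖w‖ :=
    le_trans (ContinuousLinearMap.le_opNorm _ _)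
      (mul_le_mul_of_nonneg_right (hDubound θ') (norm_nonneg w))
  have hΔznn : (0:ℝ) ≤ ‖zmap θ - zmap θ'‖ := norm_nonneg _
  have s1 : ‖M (zmap θ') - M (zmap θ)‖ * ‖w‖ ≤ (L₂ * ‖zmap θ - zmap θ'‖) * ‖w‖ :=
    mul_le_mul_of_nonneg_right C (norm_nonneg w)
  have s2 : ‖H (zmap θ') - H (zmap θ)‖ * ‖Du θ' w‖
      ≤ (L₃ * ‖zmap θ - zmap θ'‖) * (L₁ / μ * ‖w‖) :=
    mul_le_mul D E (norm_nonneg _) (mul_nonneg hL3 hΔznn)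
  have s3 : μ * ‖(Du θ - Du θ') w‖
      ≤ ((L₂ + L₃ * (L₁ / μ)) * ‖w‖) * ‖zmap θ - zmap θ'‖ := by
    have e : (L₂ * ‖zmap θ - zmap θ'‖) * ‖w‖ + (L₃ * ‖zmap θ - zmap θ'‖) * (L₁ / μ * ‖w‖)
        = ((L₂ + L₃ * (L₁ / μ)) * ‖w‖) * ‖zmap θ - zmap θ'‖ := by ring
    linarith [A, B, s1, s2]
  have s4 : ((L₂ + L₃ * (L₁ / μ)) * ‖w‖) * ‖zmap θ - zmap θ'‖
      ≤ ((L₂ + L₃ * (L₁ / μ)) * ‖w‖) * ((L₁ / μ + 1) * ‖θ - θ'‖) := by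
    refine mul_le_mul_of_nonneg_left hΔz ?_
    have : (0:ℝ) ≤ L₂ + L₃ * (L₁ / μ) := by positivity
    positivity
  have s5 : μ * ((L₂ / μ + (L₁ * L₂ + L₁ * L₃) / μ ^ 2 + L₁ ^ 2 * L₃ / μ ^ 3) * ‖θ - θ'‖ * ‖w‖)
      = ((L₂ + L₃ * (L₁ / μ)) * ‖w‖) * ((L₁ / μ + 1) * ‖θ - θ'‖) := by
    field_simp
    ring
  have s6 : μ * ‖(Du θ - Du θ') w‖
      ≤ μ * ((L₂ / μ + (L₁ * L₂ + L₁ * L₃) / μ ^ 2 + L₁ ^ 2 * L₃ / μ ^ 3) * ‖θ - θ'‖ * ‖w‖) := by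
    rw [s5]; exact le_trans s3 s4
  have := (mul_le_mul_iff_right₀ hμ).mp s6
  calc ‖(fderiv ℝ ustar θ - fderiv ℝ ustar θ') w‖
      = ‖(Du θ - Du θ') w‖ := rfl
    _ ≤ (L₂ / μ + (L₁ * L₂ + L₁ * L₃) / μ ^ 2 + L₁ ^ 2 * L₃ / μ ^ 3) * ‖θ - θ'‖ * ‖w‖ := this
end

section
/- Fix σ > 0, u ∈ ℝᵐ, c ∈ ℝ, and a twice differentiable map g : ℝᵈ → ℝᵐ. Define ℓ(θ) = c − (1/(2σ²))‖u − g(θ)‖². Then ℓ is twice differentiable, and if at a point θ we have ‖u − g(θ)‖ ≤ √m·β·σ², ‖D g(θ)‖ ≤ L₁/μ, and ‖D² g(θ)‖ ≤ L₂/μ + (L₁L₂ + L₁L₃)/μ² + L₁²L₃/μ³ (for positive constants β, μ, L₁, L₂, L₃), then the Hessian of ℓ at θ satisfies ‖∇²ℓ(θ)‖ ≤ √m·β·(L₂/μ + (L₁L₂ + L₁L₃)/μ² + L₁²L₃/μ³) + L₁²/(μ²σ²). -/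
set_option maxHeartbeats 1000000

open ContinuousLinearMap InnerProductSpace

section Aux

variable {E F : Type*} [NormedAddCommGroup E] [InnerProductSpace ℝ E] [CompleteSpace E]
  [NormedAddCommGroup F] [InnerProductSpace ℝ F] [CompleteSpace F]

noncomputable def adjCLM : (E →L[ℝ] F) →L[ℝ] (F →L[ℝ] E) :=
  LinearMap.mkContinuous
    { toFun := ContinuousLinearMap.adjoint
      map_add' := fun A B => map_add _ A B
      map_smul' := fun c A => by simp }
    1 (fun A => by simp [LinearIsometryEquiv.norm_map])

@[simp] lemma adjCLM_apply (A : E →L[ℝ] F) :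
    adjCLM A = ContinuousLinearMap.adjoint A := rfl

lemma grad_formula {σ : ℝ} (hσ : 0 < σ) (u : F) (c : ℝ) (g : E → F)
    (hg : ContDiff ℝ 2 g) (t : E) :
    HasGradientAt (fun θ' => c - 1 / (2 * σ ^ 2) * ‖u - g θ'‖ ^ 2)
      ((1 / σ ^ 2) • (adjCLM (fderiv ℝ g t)) (u - g t)) t := by
  rw [hasGradientAt_iff_hasFDerivAt]
  have hgd : HasFDerivAt g (fderiv ℝ g t) t :=
    ((hg.differentiable (by norm_num)) t).hasFDerivAt
  have hv : HasFDerivAt (fun s => u - g s) (-(fderiv ℝ g t)) t := by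
    have h0 := (hasFDerivAt_const u t).sub hgd
    simp only [zero_sub] at h0
    exact h0
  have h2 := hv.norm_sq
  have h3 := (hasFDerivAt_const c t).sub (h2.const_mul (1 / (2 * σ ^ 2)))
  refine h3.congr_fderiv ?_
  ext h
  have hσ2 : σ ^ 2 ≠ 0 := by positivity
  simp only [toDual_apply_apply, real_inner_smul_left, adjCLM_apply,
    ContinuousLinearMap.adjoint_inner_left, coe_sub', Pi.sub_apply,
    ContinuousLinearMap.coe_smul', Pi.smul_apply, smul_eq_mul,
    ContinuousLinearMap.coe_comp', Function.comp_apply, innerSL_apply_apply,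
    ContinuousLinearMap.neg_apply, inner_neg_right, ContinuousLinearMap.zero_apply,
    two_smul, ContinuousLinearMap.add_apply]
  field_simp
  ring

end Aux

/-- Hessian bound for the log-density of the truncated Gaussian policy:
for `ℓ(θ) = c − (1/(2σ²))‖u − g(θ)‖²` with `g` twice differentiable, `ℓ` is twice
differentiable, and under the stated pointwise bounds on `‖u − g(θ)‖`, `‖D g(θ)‖` and
`‖D² g(θ)‖`, the Hessian of `ℓ` satisfies
`‖∇²ℓ(θ)‖ ≤ √m·β·(L₂/μ + (L₁L₂+L₁L₃)/μ² + L₁²L₃/μ³) + L₁²/(μ²σ²)`. -/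
theorem hessian_log_policy_bound
    {m : ℕ} {d : ℕ} {σ : ℝ} (hσ : 0 < σ)
    (u : EuclideanSpace ℝ (Fin m)) (c : ℝ)
    (g : EuclideanSpace ℝ (Fin d) → EuclideanSpace ℝ (Fin m))
    (hg : ContDiff ℝ 2 g) :
    ContDiff ℝ 2 (fun θ => c - 1 / (2 * σ ^ 2) * ‖u - g θ‖ ^ 2) ∧
      ∀ {β μ L₁ L₂ L₃ : ℝ}, 0 < β → 0 < μ → 0 < L₁ → 0 < L₂ → 0 < L₃ →
        ∀ θ : EuclideanSpace ℝ (Fin d),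
          ‖u - g θ‖ ≤ Real.sqrt m * β * σ ^ 2 →
          ‖fderiv ℝ g θ‖ ≤ L₁ / μ →
          ‖fderiv ℝ (fun t => fderiv ℝ g t) θ‖ ≤
            L₂ / μ + (L₁ * L₂ + L₁ * L₃) / μ ^ 2 + L₁ ^ 2 * L₃ / μ ^ 3 →
          ‖fderiv ℝ (fun t =>
              gradient (fun θ' => c - 1 / (2 * σ ^ 2) * ‖u - g θ'‖ ^ 2) t) θ‖ ≤
            Real.sqrt m * β *
                (L₂ / μ + (L₁ * L₂ + L₁ * L₃) / μ ^ 2 + L₁ ^ 2 * L₃ / μ ^ 3) +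
              L₁ ^ 2 / (μ ^ 2 * σ ^ 2) := by
  constructor
  · exact contDiff_const.sub (contDiff_const.mul ((contDiff_const.sub hg).norm_sq ℝ))
  · intro β μ L₁ L₂ L₃ hβ hμ hL₁ hL₂ hL₃ θ hub hDg hD2g
    set A : EuclideanSpace ℝ (Fin d) → (EuclideanSpace ℝ (Fin d) →L[ℝ] EuclideanSpace ℝ (Fin m)) :=
      fderiv ℝ g with hA
    set A' := fderiv ℝ (fun t => fderiv ℝ g t) θ with hA'
    -- rewrite the gradient function
    have hgrad : (fun t => gradient (fun θ' => c - 1 / (2 * σ ^ 2) * ‖u - g θ'‖ ^ 2) t)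
        = fun t => (1 / σ ^ 2) • (adjCLM (A t)) (u - g t) := by
      funext t
      exact (grad_formula hσ u c g hg t).gradient
    have hAd : HasFDerivAt A A' θ := by
      have : ContDiff ℝ 1 (fderiv ℝ g) := hg.fderiv_right (by norm_num)
      exact ((this.differentiable (by norm_num)) θ).hasFDerivAt
    have hAdj : HasFDerivAt (fun t => adjCLM (A t)) ((adjCLM).comp A') θ := by
      exact ((adjCLM.hasFDerivAt).comp θ hAd :)
    have hv : HasFDerivAt (fun s => u - g s) (-(A θ)) θ := by
      have h0 := (hasFDerivAt_const u θ).sub ((hg.differentiable (by norm_num)) θ).hasFDerivAt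
      simp only [zero_sub] at h0
      exact h0
    have happ := hAdj.clm_apply hv
    have hfin := happ.const_smul (1 / σ ^ 2)
    rw [hgrad, show (fun t => (1 / σ ^ 2) • (adjCLM (A t)) (u - g t)) = (1 / σ ^ 2) • fun y => (adjCLM (A y)) (u - g y) from rfl, hfin.fderiv]
    -- now bound the norm
    have hσ2 : (0:ℝ) < σ ^ 2 := by positivity
    set H : ℝ := L₂ / μ + (L₁ * L₂ + L₁ * L₃) / μ ^ 2 + L₁ ^ 2 * L₃ / μ ^ 3 with hH
    have hHpos : 0 < H := by positivity
    have hX : ‖(adjCLM (A θ)).comp (-(A θ))‖ ≤ (L₁ / μ) * (L₁ / μ) := by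
      calc ‖(adjCLM (A θ)).comp (-(A θ))‖ ≤ ‖adjCLM (A θ)‖ * ‖-(A θ)‖ := opNorm_comp_le _ _
        _ = ‖A θ‖ * ‖A θ‖ := by
            rw [norm_neg, adjCLM_apply, LinearIsometryEquiv.norm_map]
        _ ≤ (L₁ / μ) * (L₁ / μ) := by
            exact mul_le_mul hDg hDg (norm_nonneg _) (by positivity)
    have hY : ‖((adjCLM).comp A').flip (u - g θ)‖ ≤ H * (Real.sqrt m * β * σ ^ 2) := by
      apply opNorm_le_bound _ (by positivity)
      intro h
      calc ‖(((adjCLM).comp A').flip (u - g θ)) h‖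
          = ‖(ContinuousLinearMap.adjoint (A' h)) (u - g θ)‖ := by
            simp [ContinuousLinearMap.flip_apply]
        _ ≤ ‖ContinuousLinearMap.adjoint (A' h)‖ * ‖u - g θ‖ := le_opNorm _ _
        _ = ‖A' h‖ * ‖u - g θ‖ := by rw [LinearIsometryEquiv.norm_map]
        _ ≤ (‖A'‖ * ‖h‖) * (Real.sqrt m * β * σ ^ 2) :=
            mul_le_mul (le_opNorm _ _) hub (norm_nonneg _) (by positivity)
        _ ≤ ((H) * ‖h‖) * (Real.sqrt m * β * σ ^ 2) := by
            have := mul_le_mul_of_nonneg_right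
              (mul_le_mul_of_nonneg_right hD2g (norm_nonneg h))
              (by positivity : (0:ℝ) ≤ Real.sqrt m * β * σ ^ 2)
            exact this
        _ = H * (Real.sqrt m * β * σ ^ 2) * ‖h‖ := by ring
    calc ‖(1 / σ ^ 2) • ((adjCLM (A θ)).comp (-(A θ)) + ((adjCLM).comp A').flip (u - g θ))‖
        ≤ (1 / σ ^ 2) * ‖(adjCLM (A θ)).comp (-(A θ)) + ((adjCLM).comp A').flip (u - g θ)‖ := by
          have h := norm_smul_le (1 / σ ^ 2) ((adjCLM (A θ)).comp (-(A θ)) + ((adjCLM).comp A').flip (u - g θ))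
          rw [Real.norm_eq_abs, abs_of_pos (by positivity)] at h
          exact h
      _ ≤ (1 / σ ^ 2) * ((L₁ / μ) * (L₁ / μ) + H * (Real.sqrt m * β * σ ^ 2)) := by
          apply mul_le_mul_of_nonneg_left _ (by positivity)
          exact le_trans (norm_add_le _ _) (add_le_add hX hY)
      _ = Real.sqrt m * β * H + L₁ ^ 2 / (μ ^ 2 * σ ^ 2) := by
          field_simp
          ring
end

section
/- Let J : ℝ^{n_ζ} × ℝᵈ → ℝ and z : ℝ^{n_ζ} × ℝᵈ → ℝ^{n_z} be twice continuously differentiable. Suppose ζ* : ℝᵈ → ℝ^{n_ζ} and λ : ℝᵈ → ℝ^{n_z} are differentiable and satisfy, identically in θ, the KKT conditions ∇_ζ J(ζ*(θ); θ) − λ(θ)ᵀ ∇_ζ z(ζ*(θ); θ) = 0 and z(ζ*(θ); θ) = 0. At a given θ, define (all evaluated at (ζ*(θ), θ)): A = ∇_ζ z, C = ∇_θ z, B = ∇²_{θζ} J − Σ_{j} λ_j(θ) ∇²_{θζ} z_j, and D = ∇²_{ζζ} J − Σ_{j} λ_j(θ) ∇²_{ζζ} z_j. If D is invertible and A D⁻¹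 Aᵀ is invertible, then the derivative of the primal solution satisfies ∇_θ ζ*(θ) = D⁻¹Aᵀ(A D⁻¹ Aᵀ)⁻¹(A D⁻¹ B − C) − D⁻¹ B. -/
open ContinuousLinearMap InnerProductSpace

noncomputable section

variable {E Θ : Type*} [NormedAddCommGroup E] [InnerProductSpace ℝ E] [CompleteSpace E]
  [NormedAddCommGroup Θ] [NormedSpace ℝ Θ]

/-- `ℝ`-linear version of the inverse of `InnerProductSpace.toDual`. -/
def dualSymmL (E : Type*) [NormedAddCommGroup E] [InnerProductSpace ℝ E] [CompleteSpace E] :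
    (E →L[ℝ] ℝ) ≃ₗᵢ[ℝ] E where
  toFun := (toDual ℝ E).symm
  invFun := toDual ℝ E
  map_add' x y := map_add _ x y
  map_smul' c L := by
    simpa using (toDual ℝ E).symm.map_smulₛₗ c L
  left_inv L := (toDual ℝ E).apply_symm_apply L
  right_inv x := (toDual ℝ E).symm_apply_apply x
  norm_map' L := (toDual ℝ E).symm.norm_map L

lemma gradient_eq_dualSymmL (f : E → ℝ) (x : E) :
    gradient f x = dualSymmL E (fderiv ℝ f x) := rfl

lemma inner_gradient_apply (f : E → ℝ) (x v : E) :
    (inner ℝ (gradient f x) v : ℝ) = fderiv ℝ f x v := toDual_symm_apply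

lemma fderiv_partial_fst {F' : Type*} [NormedAddCommGroup F'] [NormedSpace ℝ F']
    (f : E × Θ → F') (x : E) (t : Θ) (hf : DifferentiableAt ℝ f (x, t)) :
    fderiv ℝ (fun ζ => f (ζ, t)) x = (fderiv ℝ f (x, t)).comp (inl ℝ E Θ) :=
  (hf.hasFDerivAt.comp x (hasFDerivAt_prodMk_left x t)).fderiv

lemma fderiv_partial_snd {F' : Type*} [NormedAddCommGroup F'] [NormedSpace ℝ F']
    (f : E × Θ → F') (x : E) (t : Θ) (hf : DifferentiableAt ℝ f (x, t)) :
    fderiv ℝ (fun s => f (x, s)) t = (fderiv ℝ f (x, t)).comp (inr ℝ E Θ) :=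
  (hf.hasFDerivAt.comp t (hasFDerivAt_prodMk_right x t)).fderiv

/-- joint gradient-in-first-variable map -/
def gradMap (f : E × Θ → ℝ) : E × Θ → E :=
  fun p => dualSymmL E ((fderiv ℝ f p).comp (inl ℝ E Θ))

lemma gradMap_eq (f : E × Θ → ℝ) (hf : Differentiable ℝ f) (x : E) (t : Θ) :
    gradMap f (x, t) = gradient (fun ζ => f (ζ, t)) x := by
  rw [gradient_eq_dualSymmL, fderiv_partial_fst f x t (hf (x, t))]
  rfl

lemma contDiff_gradMap (f : E × Θ → ℝ) (hf : ContDiff ℝ 2 f) : ContDiff ℝ 1 (gradMap f) :=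
  (dualSymmL E).contDiff.comp ((hf.fderiv_right (by norm_num)).clm_comp contDiff_const)

lemma comp_prod_id_decomp {F' : Type*} [NormedAddCommGroup F'] [NormedSpace ℝ F']
    (G : E × Θ → F') (x : E) (t : Θ) (hG : DifferentiableAt ℝ G (x, t))
    (X : Θ →L[ℝ] E) :
    (fderiv ℝ G (x, t)).comp (X.prod (ContinuousLinearMap.id ℝ Θ)) =
      (fderiv ℝ (fun ζ => G (ζ, t)) x).comp X + fderiv ℝ (fun s => G (x, s)) t := by
  rw [fderiv_partial_fst G x t hG, fderiv_partial_snd G x t hG]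
  ext w
  simp only [ContinuousLinearMap.comp_apply, ContinuousLinearMap.prod_apply,
    ContinuousLinearMap.add_apply, ContinuousLinearMap.coe_id', id_eq,
    ContinuousLinearMap.inl_apply, ContinuousLinearMap.inr_apply]
  rw [← map_add]
  congr 1
  simp [Prod.ext_iff]

lemma adjoint_eq_sum_gradient {n m : ℕ} (f : EuclideanSpace ℝ (Fin n) → EuclideanSpace ℝ (Fin m))
    (hf : Differentiable ℝ f) (x : EuclideanSpace ℝ (Fin n)) (μ : EuclideanSpace ℝ (Fin m)) :
    (ContinuousLinearMap.adjoint (fderiv ℝ f x)) μ =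
      ∑ j, μ j • gradient (fun ζ => f ζ j) x := by
  apply ext_inner_right ℝ
  intro v
  rw [ContinuousLinearMap.adjoint_inner_left, sum_inner]
  have hcomp : ∀ j : Fin m, fderiv ℝ (fun ζ => f ζ j) x =
      (EuclideanSpace.proj j).comp (fderiv ℝ f x) := by
    intro j
    have h := (((EuclideanSpace.proj j :
        EuclideanSpace ℝ (Fin m) →L[ℝ] ℝ)).hasFDerivAt.comp x (hf x).hasFDerivAt).fderiv
    exact h
  have h1 : (inner ℝ μ ((fderiv ℝ f x) v) : ℝ) = ∑ j, μ j * ((fderiv ℝ f x) v) j := by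
    simp [PiLp.inner_apply, RCLike.inner_apply, conj_trivial]
    exact Finset.sum_congr rfl fun _ _ => mul_comm _ _
  rw [h1]
  refine Finset.sum_congr rfl fun j _ => ?_
  rw [real_inner_smul_left, inner_gradient_apply, hcomp j]
  rfl

end

set_option maxHeartbeats 2000000 in
/-- Proposition 2 (gradient of the optimization-based policy):
differentiating the KKT identities of the optimization-based policy in `θ` and solving
the resulting bordered linear system yields
`∇_θ ζ*(θ) = D⁻¹Aᵀ(A D⁻¹ Aᵀ)⁻¹(A D⁻¹ B − C) − D⁻¹ B`. -/
theorem kkt_sensitivity_formula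
    {nζ nz d : ℕ}
    (J : EuclideanSpace ℝ (Fin nζ) × EuclideanSpace ℝ (Fin d) → ℝ)
    (z : EuclideanSpace ℝ (Fin nζ) × EuclideanSpace ℝ (Fin d) → EuclideanSpace ℝ (Fin nz))
    (hJ : ContDiff ℝ 2 J) (hz : ContDiff ℝ 2 z)
    (ζstar : EuclideanSpace ℝ (Fin d) → EuclideanSpace ℝ (Fin nζ))
    (lam : EuclideanSpace ℝ (Fin d) → EuclideanSpace ℝ (Fin nz))
    (hζ : Differentiable ℝ ζstar) (hlam : Differentiable ℝ lam)
    (hstat : ∀ θ, gradient (fun ζ => J (ζ, θ)) (ζstar θ) =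
      (ContinuousLinearMap.adjoint (fderiv ℝ (fun ζ => z (ζ, θ)) (ζstar θ))) (lam θ))
    (hfeas : ∀ θ, z (ζstar θ, θ) = 0)
    (θ : EuclideanSpace ℝ (Fin d))
    (A : EuclideanSpace ℝ (Fin nζ) →L[ℝ] EuclideanSpace ℝ (Fin nz))
    (hA : A = fderiv ℝ (fun ζ => z (ζ, θ)) (ζstar θ))
    (Cm : EuclideanSpace ℝ (Fin d) →L[ℝ] EuclideanSpace ℝ (Fin nz))
    (hCm : Cm = fderiv ℝ (fun t => z (ζstar θ, t)) θ)
    (B : EuclideanSpace ℝ (Fin d) →L[ℝ] EuclideanSpace ℝ (Fin nζ))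
    (hB : B = fderiv ℝ (fun t => gradient (fun ζ => J (ζ, t)) (ζstar θ)) θ -
      ∑ j : Fin nz, lam θ j •
        fderiv ℝ (fun t => gradient (fun ζ => z (ζ, t) j) (ζstar θ)) θ)
    (D : EuclideanSpace ℝ (Fin nζ) →L[ℝ] EuclideanSpace ℝ (Fin nζ))
    (hD : D = fderiv ℝ (fun ζ => gradient (fun ζ' => J (ζ', θ)) ζ) (ζstar θ) -
      ∑ j : Fin nz, lam θ j •
        fderiv ℝ (fun ζ => gradient (fun ζ' => z (ζ', θ) j) ζ) (ζstar θ))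
    (Dinv : EuclideanSpace ℝ (Fin nζ) →L[ℝ] EuclideanSpace ℝ (Fin nζ))
    (hDinv₁ : D.comp Dinv = ContinuousLinearMap.id ℝ _)
    (hDinv₂ : Dinv.comp D = ContinuousLinearMap.id ℝ _)
    (Sinv : EuclideanSpace ℝ (Fin nz) →L[ℝ] EuclideanSpace ℝ (Fin nz))
    (hSinv₁ : (A.comp (Dinv.comp (ContinuousLinearMap.adjoint A))).comp Sinv =
      ContinuousLinearMap.id ℝ _)
    (hSinv₂ : Sinv.comp (A.comp (Dinv.comp (ContinuousLinearMap.adjoint A))) =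
      ContinuousLinearMap.id ℝ _) :
    fderiv ℝ ζstar θ =
      (Dinv.comp ((ContinuousLinearMap.adjoint A).comp
        (Sinv.comp ((A.comp (Dinv.comp B)) - Cm)))) - Dinv.comp B := by
  classical
  have hJd : Differentiable ℝ J := hJ.differentiable two_ne_zero
  have hzd : Differentiable ℝ z := hz.differentiable two_ne_zero
  have hzcj : ∀ j : Fin nz, ContDiff ℝ 2 (fun q => z q j) := fun j =>
    (EuclideanSpace.proj j :
      EuclideanSpace ℝ (Fin nz) →L[ℝ] ℝ).contDiff.comp hz
  have hzcjd : ∀ j : Fin nz, Differentiable ℝ (fun q => z q j) := fun j =>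
    (hzcj j).differentiable two_ne_zero
  set p : EuclideanSpace ℝ (Fin nζ) × EuclideanSpace ℝ (Fin d) := (ζstar θ, θ) with hp
  set X : EuclideanSpace ℝ (Fin d) →L[ℝ] EuclideanSpace ℝ (Fin nζ) :=
    fderiv ℝ ζstar θ with hXdef
  set L : EuclideanSpace ℝ (Fin d) →L[ℝ] EuclideanSpace ℝ (Fin nz) :=
    fderiv ℝ lam θ with hLdef
  have hGJ : ContDiff ℝ 1 (gradMap J) := contDiff_gradMap J hJ
  have hGz : ∀ j, ContDiff ℝ 1 (gradMap (fun q => z q j)) := fun j =>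
    contDiff_gradMap _ (hzcj j)
  have hpartz : ∀ t, Differentiable ℝ (fun ζ => z (ζ, t)) := fun t =>
    hzd.comp (differentiable_id.prodMk (differentiable_const t))
  -- stationarity as an identity of functions of t
  have keyfun : (fun t => gradMap J (ζstar t, t)) =
      (fun t => ∑ j, lam t j • gradMap (fun q => z q j) (ζstar t, t)) := by
    funext t
    rw [gradMap_eq J hJd, hstat t]
    have := adjoint_eq_sum_gradient (fun ζ => z (ζ, t)) (hpartz t) (ζstar t) (lam t)
    rw [this]
    refine Finset.sum_congr rfl fun j _ => ?_
    rw [gradMap_eq (fun q => z q j) (hzcjd j)]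
  have hXprod : HasFDerivAt (fun t => (ζstar t, t))
      (X.prod (ContinuousLinearMap.id ℝ _)) θ :=
    (hζ θ).hasFDerivAt.prodMk (hasFDerivAt_id θ)
  have hLHS : HasFDerivAt (fun t => gradMap J (ζstar t, t))
      ((fderiv ℝ (gradMap J) p).comp (X.prod (ContinuousLinearMap.id ℝ _))) θ := by
    have h := HasFDerivAt.comp (f := fun t => (ζstar t, t)) θ
      ((hGJ.differentiable one_ne_zero) p).hasFDerivAt hXprod
    exact h
  have hterm : ∀ j : Fin nz, HasFDerivAt (fun t => lam t j • gradMap (fun q => z q j) (ζstar t, t))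
      (lam θ j • ((fderiv ℝ (gradMap (fun q => z q j)) p).comp
          (X.prod (ContinuousLinearMap.id ℝ _))) +
        (((EuclideanSpace.proj j :
            EuclideanSpace ℝ (Fin nz) →L[ℝ] ℝ)).comp L).smulRight
          (gradMap (fun q => z q j) p)) θ := by
    intro j
    have h1 : HasFDerivAt (fun t => lam t j)
        (((EuclideanSpace.proj j :
          EuclideanSpace ℝ (Fin nz) →L[ℝ] ℝ)).comp L) θ :=
      ((EuclideanSpace.proj j :
        EuclideanSpace ℝ (Fin nz) →L[ℝ] ℝ)).hasFDerivAt.comp θ (hlam θ).hasFDerivAt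
    have h2 : HasFDerivAt (fun t => gradMap (fun q => z q j) (ζstar t, t))
        ((fderiv ℝ (gradMap (fun q => z q j)) p).comp
          (X.prod (ContinuousLinearMap.id ℝ _))) θ := by
      have h := HasFDerivAt.comp (f := fun t => (ζstar t, t)) θ
        (((hGz j).differentiable one_ne_zero) p).hasFDerivAt hXprod
      exact h
    exact h1.smul h2
  have hRHS : HasFDerivAt (fun t => ∑ j, lam t j • gradMap (fun q => z q j) (ζstar t, t))
      (∑ j, (lam θ j • ((fderiv ℝ (gradMap (fun q => z q j)) p).comp
          (X.prod (ContinuousLinearMap.id ℝ _))) +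
        (((EuclideanSpace.proj j :
            EuclideanSpace ℝ (Fin nz) →L[ℝ] ℝ)).comp L).smulRight
          (gradMap (fun q => z q j) p))) θ :=
    HasFDerivAt.fun_sum fun j _ => hterm j
  have EQ1 : (fderiv ℝ (gradMap J) p).comp (X.prod (ContinuousLinearMap.id ℝ _)) =
      ∑ j, (lam θ j • ((fderiv ℝ (gradMap (fun q => z q j)) p).comp
          (X.prod (ContinuousLinearMap.id ℝ _))) +
        (((EuclideanSpace.proj j :
            EuclideanSpace ℝ (Fin nz) →L[ℝ] ℝ)).comp L).smulRight
          (gradMap (fun q => z q j) p)) := by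
    rw [← hLHS.fderiv, keyfun, hRHS.fderiv]
  -- decompositions of the joint derivatives into partial derivatives
  have decJ := comp_prod_id_decomp (gradMap J) (ζstar θ) θ
    ((hGJ.differentiable one_ne_zero) p) X
  have decz := fun j : Fin nz => comp_prod_id_decomp (gradMap (fun q => z q j)) (ζstar θ) θ
    (((hGz j).differentiable one_ne_zero) p) X
  -- D and B in terms of gradMap
  have hDalt : D = (fderiv ℝ (fun ζ => gradMap J (ζ, θ)) (ζstar θ)) -
      ∑ j, lam θ j • fderiv ℝ (fun ζ => gradMap (fun q => z q j) (ζ, θ)) (ζstar θ) := by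
    rw [hD]
    congr 1
    · congr 1
      funext ζ
      rw [gradMap_eq J hJd]
    · refine Finset.sum_congr rfl fun j _ => ?_
      congr 2
      funext ζ
      rw [gradMap_eq (fun q => z q j) (hzcjd j)]
  have hBalt : B = (fderiv ℝ (fun t => gradMap J (ζstar θ, t)) θ) -
      ∑ j, lam θ j • fderiv ℝ (fun t => gradMap (fun q => z q j) (ζstar θ, t)) θ := by
    rw [hB]
    congr 1
    · congr 1
      funext t
      rw [gradMap_eq J hJd]
    · refine Finset.sum_congr rfl fun j _ => ?_
      congr 2
      funext t
      rw [gradMap_eq (fun q => z q j) (hzcjd j)]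
  -- the adjoint as the sum of smulRight terms
  have hAdj : (ContinuousLinearMap.adjoint A).comp L =
      ∑ j, (((EuclideanSpace.proj j :
          EuclideanSpace ℝ (Fin nz) →L[ℝ] ℝ)).comp L).smulRight
        (gradMap (fun q => z q j) p) := by
    refine ContinuousLinearMap.ext fun w => ?_
    rw [ContinuousLinearMap.comp_apply, hA,
      adjoint_eq_sum_gradient (fun ζ => z (ζ, θ)) (hpartz θ) (ζstar θ) (L w)]
    rw [ContinuousLinearMap.sum_apply]
    refine Finset.sum_congr rfl fun j _ => ?_
    rw [ContinuousLinearMap.smulRight_apply, ContinuousLinearMap.comp_apply,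
      gradMap_eq (fun q => z q j) (hzcjd j)]
    rfl
  -- first main equation: D ∘ X + B = Aᵀ ∘ L
  have E1 : D.comp X + B = (ContinuousLinearMap.adjoint A).comp L := by
    rw [hDalt, hBalt, hAdj, ContinuousLinearMap.sub_comp]
    have hsum : (∑ j, lam θ j •
        fderiv ℝ (fun ζ => gradMap (fun q => z q j) (ζ, θ)) (ζstar θ)).comp X =
        ∑ j, lam θ j •
          ((fderiv ℝ (fun ζ => gradMap (fun q => z q j) (ζ, θ)) (ζstar θ)).comp X) := by
      ext w
      simp
    rw [hsum]
    have EQ1' : (fderiv ℝ (fun ζ => gradMap J (ζ, θ)) (ζstar θ)).comp X +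
        fderiv ℝ (fun t => gradMap J (ζstar θ, t)) θ =
        (∑ j, lam θ j •
          ((fderiv ℝ (fun ζ => gradMap (fun q => z q j) (ζ, θ)) (ζstar θ)).comp X) +
        ∑ j, lam θ j • fderiv ℝ (fun t => gradMap (fun q => z q j) (ζstar θ, t)) θ) +
        ∑ j, (((EuclideanSpace.proj j :
            EuclideanSpace ℝ (Fin nz) →L[ℝ] ℝ)).comp L).smulRight
          (gradMap (fun q => z q j) p) := by
      rw [← decJ, EQ1]
      rw [Finset.sum_add_distrib]
      congr 1
      rw [← Finset.sum_add_distrib]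
      refine Finset.sum_congr rfl fun j _ => ?_
      rw [decz j, smul_add]
    rw [sub_add_sub_comm, EQ1', add_sub_cancel_left]
  -- second main equation: A ∘ X + C = 0
  have E2 : A.comp X + Cm = 0 := by
    have hzder : HasFDerivAt (fun t => z (ζstar t, t))
        ((fderiv ℝ z p).comp (X.prod (ContinuousLinearMap.id ℝ _))) θ := by
      have h := HasFDerivAt.comp (f := fun t => (ζstar t, t)) θ
        (hzd p).hasFDerivAt hXprod
      exact h
    have h0 : fderiv ℝ (fun t => z (ζstar t, t)) θ = 0 := by
      have : (fun t => z (ζstar t, t)) = fun _ => (0 : EuclideanSpace ℝ (Fin nz)) :=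
        funext hfeas
      rw [this, fderiv_const_apply]
    have hdec := comp_prod_id_decomp z (ζstar θ) θ (hzd p) X
    rw [← hA, ← hCm] at hdec
    rw [← hdec, ← hzder.fderiv, h0]
  -- solve the bordered linear system
  have hDX : D.comp X = (ContinuousLinearMap.adjoint A).comp L - B :=
    eq_sub_of_add_eq E1
  have hXeq : X = Dinv.comp ((ContinuousLinearMap.adjoint A).comp L - B) := by
    calc X = (Dinv.comp D).comp X := by rw [hDinv₂, ContinuousLinearMap.id_comp]
    _ = Dinv.comp (D.comp X) := by rw [ContinuousLinearMap.comp_assoc]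
    _ = Dinv.comp ((ContinuousLinearMap.adjoint A).comp L - B) := by rw [hDX]
  have hLeq : L = Sinv.comp ((A.comp (Dinv.comp B)) - Cm) := by
    have h2 : A.comp X = -Cm := eq_neg_of_add_eq_zero_left E2
    rw [hXeq, ContinuousLinearMap.comp_sub, ContinuousLinearMap.comp_sub] at h2
    have h3 : (A.comp (Dinv.comp (ContinuousLinearMap.adjoint A))).comp L =
        A.comp (Dinv.comp B) - Cm := by
      have h4 : A.comp (Dinv.comp ((ContinuousLinearMap.adjoint A).comp L)) =
          A.comp (Dinv.comp B) - Cm := by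
        rw [sub_eq_iff_eq_add] at h2
        rw [h2]
        abel
      rw [ContinuousLinearMap.comp_assoc, ContinuousLinearMap.comp_assoc]
      exact h4
    calc L = (Sinv.comp (A.comp (Dinv.comp (ContinuousLinearMap.adjoint A)))).comp L := by
          rw [hSinv₂, ContinuousLinearMap.id_comp]
    _ = Sinv.comp ((A.comp (Dinv.comp (ContinuousLinearMap.adjoint A))).comp L) := by
          rw [ContinuousLinearMap.comp_assoc]
    _ = Sinv.comp ((A.comp (Dinv.comp B)) - Cm) := by rw [h3]
  rw [hXeq, hLeq, ContinuousLinearMap.comp_sub]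
end

section
/- Let C : ℝᵈ → ℝ be differentiable with L_C-Lipschitz gradient, where L_C > 0. Let θ ∈ ℝᵈ, let ĝ ∈ ℝᵈ be an inexact gradient with ‖ĝ − ∇C(θ)‖² ≤ e for some e ≥ 0, let η > 0, and set θ' = θ − η ĝ. Then C(θ') ≤ C(θ) − (η/2 − η²L_C)‖∇C(θ)‖² + (η/2 + η²L_C) e. -/
set_option maxHeartbeats 1000000

open InnerProductSpace

lemma descent_lemma {d : ℕ} (C : EuclideanSpace ℝ (Fin d) → ℝ)
    {L : ℝ} (hL : 0 ≤ L)
    (hdiff : Differentiable ℝ C)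
    (hlip : ∀ a b, ‖gradient C a - gradient C b‖ ≤ L * ‖a - b‖)
    (x v : EuclideanSpace ℝ (Fin d)) :
    C (x + v) ≤ C x + inner ℝ (gradient C x) v + L / 2 * ‖v‖ ^ 2 := by
  set ψ : ℝ → ℝ := fun t => (inner ℝ (gradient C (x + t • v)) v : ℝ) with hψ
  have hcontg : Continuous (gradient C) := by
    refine (LipschitzWith.of_dist_le_mul (K := Real.toNNReal L) ?_).continuous
    intro a b
    simpa [dist_eq_norm, Real.coe_toNNReal L hL] using hlip a b
  have hcψ : Continuous ψ := by
    apply Continuous.inner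
    · exact hcontg.comp (by continuity)
    · exact continuous_const
  have hderiv : ∀ t : ℝ, HasDerivAt (fun t => C (x + t • v)) (ψ t) t := by
    intro t
    have h1 : HasFDerivAt C (toDual ℝ _ (gradient C (x + t • v))) (x + t • v) :=
      (hdiff (x + t • v)).hasGradientAt
    have h2 : HasDerivAt (fun t : ℝ => x + t • v) v t := by
      simpa using ((hasDerivAt_id t).smul_const v).const_add x
    have h3 := h1.comp_hasDerivAt t h2
    rw [toDual_apply_apply] at h3
    exact h3
  have hint : ∫ t in (0:ℝ)..1, ψ t = C (x + v) - C x := by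
    have := intervalIntegral.integral_eq_sub_of_hasDerivAt
      (f := fun t => C (x + t • v)) (f' := ψ) (a := 0) (b := 1)
      (fun t _ => hderiv t) (hcψ.intervalIntegrable 0 1)
    simpa using this
  have hbound : ∀ t ∈ Set.Icc (0:ℝ) 1, ψ t ≤ ψ 0 + L * t * ‖v‖ ^ 2 := by
    intro t ht
    have h1 : ψ t - ψ 0 ≤ ‖gradient C (x + t • v) - gradient C x‖ * ‖v‖ := by
      have : ψ t - ψ 0 = (inner ℝ (gradient C (x + t • v) - gradient C x) v : ℝ) := by
        simp [hψ, inner_sub_left]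
      rw [this]
      exact real_inner_le_norm _ _
    have h2 : ‖gradient C (x + t • v) - gradient C x‖ ≤ L * (t * ‖v‖) := by
      have := hlip (x + t • v) x
      simpa [add_sub_cancel_left, norm_smul, abs_of_nonneg ht.1, mul_assoc] using this
    nlinarith [norm_nonneg v, mul_le_mul_of_nonneg_right h2 (norm_nonneg v)]
  have hmono : ∫ t in (0:ℝ)..1, ψ t ≤ ∫ t in (0:ℝ)..1, (ψ 0 + L * t * ‖v‖ ^ 2) := by
    apply intervalIntegral.integral_mono_on zero_le_one
      (hcψ.intervalIntegrable 0 1)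
      ((by continuity : Continuous fun t : ℝ => ψ 0 + L * t * ‖v‖ ^ 2).intervalIntegrable 0 1)
      hbound
  have hval : ∫ t in (0:ℝ)..1, (ψ 0 + L * t * ‖v‖ ^ 2) = ψ 0 + L / 2 * ‖v‖ ^ 2 := by
    have hrw : ∀ t : ℝ, ψ 0 + L * t * ‖v‖ ^ 2 = ψ 0 + (L * ‖v‖ ^ 2) * t := by
      intro t; ring
    simp_rw [hrw]
    rw [intervalIntegral.integral_add (f := fun _ => ψ 0) (g := fun t => L * ‖v‖ ^ 2 * t) (intervalIntegrable_const)
      ((continuous_const.mul continuous_id' : Continuous fun t : ℝ => L * ‖v‖ ^ 2 * t).intervalIntegrable 0 1),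
      intervalIntegral.integral_const_mul, integral_id]
    simp; ring
  have hψ0 : ψ 0 = inner ℝ (gradient C x) v := by simp [hψ]
  linarith [hint, hmono.trans_eq hval, hψ0.ge, hψ0.le]

/-- Per-iteration descent inequality for an inexact gradient step on a
function with `L_C`-Lipschitz gradient. -/
theorem inexact_gradient_descent_step
    {d : ℕ} (C : EuclideanSpace ℝ (Fin d) → ℝ)
    {L_C : ℝ} (hL : 0 < L_C)
    (hdiff : Differentiable ℝ C)
    (hlip : ∀ a b, ‖gradient C a - gradient C b‖ ≤ L_C * ‖a - b‖)
    (θ ghat : EuclideanSpace ℝ (Fin d))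
    {e : ℝ} (he : 0 ≤ e) (hg : ‖ghat - gradient C θ‖ ^ 2 ≤ e)
    {η : ℝ} (hη : 0 < η) :
    C (θ - η • ghat) ≤
      C θ - (η / 2 - η ^ 2 * L_C) * ‖gradient C θ‖ ^ 2 + (η / 2 + η ^ 2 * L_C) * e := by
  have key := descent_lemma C hL.le hdiff hlip θ (-(η • ghat))
  rw [← sub_eq_add_neg] at key
  set g := gradient C θ with hgdef
  set δ := ghat - g with hδ
  have hghat : ghat = g + δ := by simp [hδ]
  have h1 : (inner ℝ g (-(η • ghat)) : ℝ) = -η * (‖g‖ ^ 2 + inner ℝ g δ) := by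
    rw [hghat, inner_neg_right, real_inner_smul_right, inner_add_right,
      real_inner_self_eq_norm_sq]
    ring
  have h2 : ‖-(η • ghat)‖ ^ 2 = η ^ 2 * ‖ghat‖ ^ 2 := by
    rw [norm_neg, norm_smul]
    simp [abs_of_pos hη, mul_pow]
  have hCS : (inner ℝ g δ : ℝ) ≥ -(‖g‖ ^ 2 + ‖δ‖ ^ 2) / 2 := by
    have h := real_inner_le_norm g (-δ)
    rw [inner_neg_right, norm_neg] at h
    nlinarith [h, sq_nonneg (‖g‖ - ‖δ‖)]
  have hle : ‖ghat‖ ≤ ‖g‖ + ‖δ‖ := by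
    calc ‖ghat‖ = ‖g + δ‖ := by rw [hghat]
    _ ≤ ‖g‖ + ‖δ‖ := norm_add_le g δ
  have hgh : ‖ghat‖ ^ 2 ≤ 2 * ‖g‖ ^ 2 + 2 * ‖δ‖ ^ 2 := by
    nlinarith [hle, norm_nonneg g, norm_nonneg δ, norm_nonneg ghat, sq_nonneg (‖g‖ - ‖δ‖)]
  rw [h1, h2] at key
  have h3 : -η * (inner ℝ g δ : ℝ) ≤ η * (‖g‖ ^ 2 + ‖δ‖ ^ 2) / 2 := by
    nlinarith [mul_le_mul_of_nonneg_left hCS hη.le]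
  have h4 : L_C / 2 * (η ^ 2 * ‖ghat‖ ^ 2) ≤ L_C * η ^ 2 * (‖g‖ ^ 2 + ‖δ‖ ^ 2) := by
    nlinarith [mul_le_mul_of_nonneg_left hgh (by positivity : (0:ℝ) ≤ L_C / 2 * η ^ 2)]
  have h6 : (η / 2 + η ^ 2 * L_C) * ‖δ‖ ^ 2 ≤ (η / 2 + η ^ 2 * L_C) * e :=
    mul_le_mul_of_nonneg_left hg (by positivity)
  nlinarith [key, h3, h4, h6]
end

section
/- Let C : ℝᵈ → ℝ be differentiable with L_C-Lipschitz gradient (L_C > 0), and suppose C(θ) ≥ C(θ̄) for all θ, where θ̄ ∈ ℝᵈ. Fix ε ≥ 0 and K ∈ ℕ with K ≥ 1, set the stepsize η = 1/(4L_C), and let θ⁽⁰⁾, …, θ⁽ᴷ⁾ be generated by θ⁽ᵏ⁺¹⁾ = θ⁽ᵏ⁾ − η ĝ_k where each ĝ_k ∈ ℝᵈ satisfies ‖ĝ_k − ∇C(θ⁽ᵏ⁾)‖² ≤ ε. Then min_{k = 0, …, K−1} ‖∇C(θ⁽ᵏ⁾)‖² ≤ 16 L_C (C(θ⁽⁰⁾)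 − C(θ̄))/K + 3ε. -/
open intervalIntegral in
lemma my_descent_lemma {F : Type*} [NormedAddCommGroup F] [InnerProductSpace ℝ F]
    [CompleteSpace F] (C : F → ℝ) {L : ℝ} (hL : 0 ≤ L) (hdiff : Differentiable ℝ C)
    (hlip : ∀ a b, ‖gradient C a - gradient C b‖ ≤ L * ‖a - b‖) (x y : F) :
    C y ≤ C x + inner ℝ (gradient C x) (y - x) + L / 2 * ‖y - x‖ ^ 2 := by
  set v := y - x with hv
  have hderiv : ∀ t : ℝ, HasDerivAt (fun t : ℝ => C (x + t • v))
      (inner ℝ (gradient C (x + t • v)) v : ℝ) t := by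
    intro t
    have h1 : HasDerivAt (fun t : ℝ => x + t • v) v t := by
      simpa using ((hasDerivAt_id t).smul_const v).const_add x
    have h2 := (hdiff (x + t • v)).hasGradientAt.hasFDerivAt.comp_hasDerivAt t h1
    exact h2.congr_deriv (by simp [InnerProductSpace.toDual_apply_apply])
  have hgc : Continuous (gradient C) := by
    have : LipschitzWith (Real.toNNReal L) (gradient C) := by
      apply LipschitzWith.of_dist_le_mul
      intro a b
      simpa [dist_eq_norm, Real.coe_toNNReal L hL] using hlip a b
    exact this.continuous
  have hcont : Continuous fun t : ℝ => (inner ℝ (gradient C (x + t • v)) v : ℝ) :=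
    (hgc.comp (continuous_const.add (continuous_id.smul continuous_const))).inner
      continuous_const
  have hint : ∫ t in (0:ℝ)..1, (inner ℝ (gradient C (x + t • v)) v : ℝ)
      = C (x + (1:ℝ) • v) - C (x + (0:ℝ) • v) := by
    exact intervalIntegral.integral_eq_sub_of_hasDerivAt
      (fun t _ => hderiv t) (hcont.intervalIntegrable 0 1)
  have hbound : ∫ t in (0:ℝ)..1, (inner ℝ (gradient C (x + t • v)) v : ℝ)
      ≤ ∫ t in (0:ℝ)..1, ((inner ℝ (gradient C x) v : ℝ) + (L * ‖v‖ ^ 2) * t) := by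
    apply intervalIntegral.integral_mono_on (by norm_num)
      (hcont.intervalIntegrable 0 1)
      ((by fun_prop : Continuous fun t : ℝ => (inner ℝ (gradient C x) v : ℝ) + (L * ‖v‖ ^ 2) * t).intervalIntegrable 0 1)
    intro t ht
    have h1 : (inner ℝ (gradient C (x + t • v)) v : ℝ) - inner ℝ (gradient C x) v
        = inner ℝ (gradient C (x + t • v) - gradient C x) v := by
      rw [inner_sub_left]
    have h2 : (inner ℝ (gradient C (x + t • v) - gradient C x) v : ℝ)
        ≤ ‖gradient C (x + t • v) - gradient C x‖ * ‖v‖ := real_inner_le_norm _ _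
    have h3 : ‖gradient C (x + t • v) - gradient C x‖ ≤ L * (t * ‖v‖) := by
      have := hlip (x + t • v) x
      simpa [norm_smul, abs_of_nonneg ht.1] using this
    have h4 : ‖gradient C (x + t • v) - gradient C x‖ * ‖v‖ ≤ L * (t * ‖v‖) * ‖v‖ :=
      mul_le_mul_of_nonneg_right h3 (norm_nonneg v)
    nlinarith [norm_nonneg v]
  have hval : ∫ t in (0:ℝ)..1, ((inner ℝ (gradient C x) v : ℝ) + (L * ‖v‖ ^ 2) * t)
      = (inner ℝ (gradient C x) v : ℝ) + L / 2 * ‖v‖ ^ 2 := by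
    rw [intervalIntegral.integral_add (intervalIntegrable_const)
      ((by fun_prop : Continuous fun t : ℝ => (L * ‖v‖ ^ 2) * t).intervalIntegrable 0 1),
      intervalIntegral.integral_const, intervalIntegral.integral_const_mul,
      integral_id]
    simp; ring
  have hxy : x + (1:ℝ) • v = y := by rw [hv]; simp
  have hx0 : x + (0:ℝ) • v = x := by simp
  rw [hxy, hx0] at hint
  linarith [hint ▸ hbound, hval]

set_option maxHeartbeats 1000000 in
/-- Deterministic core of Theorem 1 (non-asymptotic convergence of
DiffOP): with stepsize `η = 1/(4 L_C)` and every gradient estimate `ε`-accurate in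
squared norm, inexact gradient descent reaches a point with
`‖∇C‖² ≤ 16 L_C (C(θ⁽⁰⁾) − C(θ̄))/K + 3ε` within the first `K` iterates. -/
theorem diffop_convergence_deterministic_core
    {d : ℕ} (C : EuclideanSpace ℝ (Fin d) → ℝ)
    {L_C : ℝ} (hL : 0 < L_C)
    (hdiff : Differentiable ℝ C)
    (hlip : ∀ a b, ‖gradient C a - gradient C b‖ ≤ L_C * ‖a - b‖)
    (θbar : EuclideanSpace ℝ (Fin d)) (hlow : ∀ θ, C θbar ≤ C θ)
    {ε : ℝ} (hε : 0 ≤ ε) {K : ℕ} (hK : 1 ≤ K)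
    (θ : ℕ → EuclideanSpace ℝ (Fin d)) (g : ℕ → EuclideanSpace ℝ (Fin d))
    (hupd : ∀ k, θ (k + 1) = θ k - (1 / (4 * L_C)) • g k)
    (herr : ∀ k, ‖g k - gradient C (θ k)‖ ^ 2 ≤ ε) :
    ∃ k < K, ‖gradient C (θ k)‖ ^ 2 ≤
      16 * L_C * (C (θ 0) - C θbar) / K + 3 * ε := by
  set η : ℝ := 1 / (4 * L_C) with hη_def
  have hηpos : 0 < η := by positivity
  have hη1 : L_C * η = 1 / 4 := by rw [hη_def]; field_simp
  clear_value η
  -- one-step inequality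
  have hstep : ∀ k, ‖gradient C (θ k)‖ ^ 2
      ≤ 8 * L_C * (C (θ k) - C (θ (k + 1))) + (5 / 2) * ε := by
    intro k
    set G := gradient C (θ k) with hG
    set e := g k - G with he
    have hge : g k = G + e := by rw [he]; abel
    have hb2 : ‖e‖ ^ 2 ≤ ε := by rw [he, hG]; exact herr k
    have hsub : θ (k + 1) - θ k = -(η • g k) := by rw [hupd k]; abel
    have hdesc := my_descent_lemma C hL.le hdiff hlip (θ k) (θ (k + 1))
    rw [hsub, ← hG] at hdesc
    have hI : (inner ℝ G (-(η • g k)) : ℝ) = -(η * (‖G‖ ^ 2 + inner ℝ G e)) := by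
      rw [hge, inner_neg_right, real_inner_smul_right, inner_add_right,
        real_inner_self_eq_norm_sq]
    have hip2 : -(‖G‖ * ‖e‖) ≤ (inner ℝ G e : ℝ) := by
      have := real_inner_le_norm G (-e)
      simpa [inner_neg_right, neg_le] using this
    have hgnorm : ‖g k‖ ≤ ‖G‖ + ‖e‖ := by rw [hge]; exact norm_add_le G e
    clear_value G e
    have hN : ‖-(η • g k)‖ ^ 2 ≤ η ^ 2 * (2 * (‖G‖ ^ 2 + ‖e‖ ^ 2)) := by
      have h1 : ‖-(η • g k)‖ = η * ‖g k‖ := by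
        rw [norm_neg, norm_smul, Real.norm_eq_abs, abs_of_pos hηpos]
      rw [h1]
      have h2 : ‖g k‖ ^ 2 ≤ (‖G‖ + ‖e‖) ^ 2 :=
        pow_le_pow_left₀ (norm_nonneg _) hgnorm 2
      nlinarith [sq_nonneg (‖G‖ - ‖e‖), sq_nonneg η, norm_nonneg (g k)]
    rw [hI] at hdesc
    have h0 : η * (‖G‖ ^ 2 + inner ℝ G e) - L_C / 2 * ‖-(η • g k)‖ ^ 2
        ≤ C (θ k) - C (θ (k + 1)) := by linarith
    have h1 : 8 * L_C * (η * (‖G‖ ^ 2 + inner ℝ G e) - L_C / 2 * ‖-(η • g k)‖ ^ 2)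
        ≤ 8 * L_C * (C (θ k) - C (θ (k + 1))) :=
      mul_le_mul_of_nonneg_left h0 (by positivity)
    have h3 : 4 * L_C ^ 2 * ‖-(η • g k)‖ ^ 2
        ≤ 4 * L_C ^ 2 * (η ^ 2 * (2 * (‖G‖ ^ 2 + ‖e‖ ^ 2))) :=
      mul_le_mul_of_nonneg_left hN (by positivity)
    have h4 : 4 * L_C ^ 2 * (η ^ 2 * (2 * (‖G‖ ^ 2 + ‖e‖ ^ 2)))
        = (1 / 2) * (‖G‖ ^ 2 + ‖e‖ ^ 2) := by
      linear_combination (8 * (‖G‖ ^ 2 + ‖e‖ ^ 2) * (L_C * η + 1 / 4)) * hη1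
    have h2 : 8 * L_C * (η * (‖G‖ ^ 2 + inner ℝ G e) - L_C / 2 * ‖-(η • g k)‖ ^ 2)
        = 2 * (‖G‖ ^ 2 + inner ℝ G e) - 4 * L_C ^ 2 * ‖-(η • g k)‖ ^ 2 := by
      linear_combination (8 * (‖G‖ ^ 2 + (inner ℝ G e : ℝ))) * hη1
    have hab : 2 * (‖G‖ * ‖e‖) ≤ ‖G‖ ^ 2 / 2 + 2 * ‖e‖ ^ 2 := by
      nlinarith [sq_nonneg (‖G‖ - 2 * ‖e‖)]
    linarith
  -- sum over k < K
  have hsum : ∑ k ∈ Finset.range K, ‖gradient C (θ k)‖ ^ 2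
      ≤ 8 * L_C * (C (θ 0) - C θbar) + K * ((5 / 2) * ε) := by
    calc ∑ k ∈ Finset.range K, ‖gradient C (θ k)‖ ^ 2
        ≤ ∑ k ∈ Finset.range K, (8 * L_C * (C (θ k) - C (θ (k + 1))) + (5 / 2) * ε) :=
          Finset.sum_le_sum fun k _ => hstep k
      _ = 8 * L_C * (C (θ 0) - C (θ K)) + K * ((5 / 2) * ε) := by
          rw [Finset.sum_add_distrib, ← Finset.mul_sum, Finset.sum_range_sub' (fun k => C (θ k)),
            Finset.sum_const, Finset.card_range, nsmul_eq_mul]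
      _ ≤ 8 * L_C * (C (θ 0) - C θbar) + K * ((5 / 2) * ε) := by
          have h9 : 8 * L_C * (C (θ 0) - C (θ K)) ≤ 8 * L_C * (C (θ 0) - C θbar) :=
            mul_le_mul_of_nonneg_left (by linarith [hlow (θ K)]) (by positivity)
          linarith
  -- pigeonhole
  have hKpos : (0 : ℝ) < K := by exact_mod_cast hK
  obtain ⟨k, hkmem, hkle⟩ := Finset.exists_le_of_sum_le
    (s := Finset.range K) (f := fun k => ‖gradient C (θ k)‖ ^ 2)
    (g := fun _ => (∑ j ∈ Finset.range K, ‖gradient C (θ j)‖ ^ 2) / K)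
    ⟨0, Finset.mem_range.mpr hK⟩
    (le_of_eq (by rw [Finset.sum_const, Finset.card_range, nsmul_eq_mul, mul_comm,
      div_mul_cancel₀ _ (ne_of_gt hKpos)]))
  refine ⟨k, Finset.mem_range.mp hkmem, ?_⟩
  have hlb : (0 : ℝ) ≤ C (θ 0) - C θbar := by linarith [hlow (θ 0)]
  have hdivle : (∑ j ∈ Finset.range K, ‖gradient C (θ j)‖ ^ 2) / K
      ≤ 8 * L_C * (C (θ 0) - C θbar) / K + (5 / 2) * ε := by
    rw [div_le_iff₀ hKpos]
    have : 8 * L_C * (C (θ 0) - C θbar) / K * K = 8 * L_C * (C (θ 0) - C θbar) := by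
      field_simp
    nlinarith [hsum]
  have hfin : 8 * L_C * (C (θ 0) - C θbar) / K + (5 / 2) * ε
      ≤ 16 * L_C * (C (θ 0) - C θbar) / K + 3 * ε := by
    have h8 : 8 * L_C * (C (θ 0) - C θbar) / K ≤ 16 * L_C * (C (θ 0) - C θbar) / K := by
      gcongr
      nlinarith
    linarith
  exact hkle.trans (hdivle.trans hfin)
end

section
/- For θ = (θ₁, θ₂, θ₃, θ₄) ∈ ℝ⁴ with θ₁ ≥ 0 and θ₂ > 0, and û = (û₁, …, û₆) ∈ ℝ⁶, define the inner rollout x̂₁(û; θ) = 5 and x̂_{i+1}(û; θ) = θ₃ x̂_i(û; θ) + θ₄ û_i for i = 1, …, 5, and the inner objective Ĵ(û; θ) = Σ_{i=1}^{6} (θ₁ x̂_i(û; θ)² + θ₂ û_i²). Then Ĵ(·; θ) has a unique global minimizer û*(θ) ∈ ℝ⁶. Define the closed-loop cost C(θ) = Σ_{t=1}^{6} (x_t² + u_t²) where u_t = û*_t(θ), x₁ = 5 and x_{t+1} = x_t − 0.5 u_t. Then for θ⁽¹⁾ = (1, 1, 2, −0.5), θ⁽²⁾ = (2, 1, 2,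 −0.5), and α = 1/2, one has C(α θ⁽¹⁾ + (1 − α) θ⁽²⁾) > α C(θ⁽¹⁾) + (1 − α) C(θ⁽²⁾); in particular, C is not convex on ℝ⁴. -/
/-- Inner rollout of the policy model: `x̂₁ = 5`, `x̂_{i+1} = θ₃ x̂_i + θ₄ û_i`
(0-indexed: `xhat θ u k` is the paper's `x̂_{k+1}`). -/
noncomputable def xhat (θ : ℝ × ℝ × ℝ × ℝ) (u : Fin 6 → ℝ) : ℕ → ℝ
  | 0 => 5
  | i + 1 => θ.2.2.1 * xhat θ u i + θ.2.2.2 * (if h : i < 6 then u ⟨i, h⟩ else 0)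

/-- Inner objective `Ĵ(û; θ) = Σ_{i=1}^{6} (θ₁ x̂_i(û; θ)² + θ₂ û_i²)`. -/
noncomputable def Jhat (θ : ℝ × ℝ × ℝ × ℝ) (u : Fin 6 → ℝ) : ℝ :=
  ∑ i : Fin 6, (θ.1 * xhat θ u i ^ 2 + θ.2.1 * u i ^ 2)

/-- Closed-loop rollout under the true dynamics: `x₁ = 5`, `x_{t+1} = x_t − 0.5 u_t`
(0-indexed: `xcl u k` is the paper's `x_{k+1}`). -/
noncomputable def xcl (u : Fin 6 → ℝ) : ℕ → ℝ
  | 0 => 5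
  | t + 1 => xcl u t - 0.5 * (if h : t < 6 then u ⟨t, h⟩ else 0)

/-- Closed-loop cost `C(θ) = Σ_{t=1}^{6} (x_t² + u_t²)` with `u = û*(θ)`. -/
noncomputable def Ccl (ustar : ℝ × ℝ × ℝ × ℝ → Fin 6 → ℝ) (θ : ℝ × ℝ × ℝ × ℝ) : ℝ :=
  ∑ t : Fin 6, (xcl (ustar θ) t ^ 2 + ustar θ t ^ 2)

lemma fm0 (h : (0:ℕ) < 6) : (⟨0, h⟩ : Fin 6) = 0 := rfl
lemma fm1 (h : (1:ℕ) < 6) : (⟨1, h⟩ : Fin 6) = 1 := rfl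
lemma fm2 (h : (2:ℕ) < 6) : (⟨2, h⟩ : Fin 6) = 2 := rfl
lemma fm3 (h : (3:ℕ) < 6) : (⟨3, h⟩ : Fin 6) = 3 := rfl
lemma fm4 (h : (4:ℕ) < 6) : (⟨4, h⟩ : Fin 6) = 4 := rfl
lemma fm5 (h : (5:ℕ) < 6) : (⟨5, h⟩ : Fin 6) = 5 := rfl

noncomputable def ua : Fin 6 → ℝ := ![(2278100/148853 : ℝ), (1051680/148853 : ℝ), (482560/148853 : ℝ), (215040/148853 : ℝ), (81920/148853 : ℝ), (0 : ℝ)]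

lemma uae0 : ua 0 = (2278100/148853 : ℝ) := rfl
lemma uae1 : ua 1 = (1051680/148853 : ℝ) := rfl
lemma uae2 : ua 2 = (482560/148853 : ℝ) := rfl
lemma uae3 : ua 3 = (215040/148853 : ℝ) := rfl
lemma uae4 : ua 4 = (81920/148853 : ℝ) := rfl
lemma uae5 : ua 5 = (0 : ℝ) := rfl

lemma keya (u : Fin 6 → ℝ) :
    Jhat ((1:ℝ), (1:ℝ), (2:ℝ), (-0.5:ℝ)) u = (49283325/148853 : ℝ) + ((1 : ℝ)*((-(1/2)*(u 0 - (2278100/148853 : ℝ)))^2 + (-(u 0 - (2278100/148853 : ℝ)) - (1/2)*(u 1 - (1051680/148853 : ℝ)))^2 + (-2*(u 0 - (2278100/148853 : ℝ)) - (u 1 - (1051680/148853 : ℝ)) - (1/2)*(u 2 - (482560/148853 : ℝ)))^2 + (-4*(u 0 - (2278100/148853 : ℝ)) - 2*(u 1 - (1051680/148853 : ℝ)) - (u 2 - (482560/148853 : ℝ)) - (1/2)*(u 3 - (215040/148853 : ℝ)))^2 + (-8*(u 0 - (2278100/148853 : ℝ)) - 4*(u 1 - (1051680/148853 : ℝ))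 - 2*(u 2 - (482560/148853 : ℝ)) - (u 3 - (215040/148853 : ℝ)) - (1/2)*(u 4 - (81920/148853 : ℝ)))^2) + ((u 0 - (2278100/148853 : ℝ))^2 + (u 1 - (1051680/148853 : ℝ))^2 + (u 2 - (482560/148853 : ℝ))^2 + (u 3 - (215040/148853 : ℝ))^2 + (u 4 - (81920/148853 : ℝ))^2 + (u 5 - (0 : ℝ))^2)) := by
  simp only [Jhat, xhat, Fin.sum_univ_six, fm0, fm1, fm2, fm3, fm4, fm5]
  norm_num
  ring

lemma mina : ∀ u : Fin 6 → ℝ, Jhat ((1:ℝ), (1:ℝ), (2:ℝ), (-0.5:ℝ)) ua ≤ Jhat ((1:ℝ), (1:ℝ), (2:ℝ), (-0.5:ℝ)) u := by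
  have hX : Jhat ((1:ℝ), (1:ℝ), (2:ℝ), (-0.5:ℝ)) ua = (49283325/148853 : ℝ) := by
    rw [keya]
    norm_num [uae0, uae1, uae2, uae3, uae4, uae5]
  intro u
  rw [hX, keya u]
  nlinarith [sq_nonneg (-(1/2)*(u 0 - (2278100/148853 : ℝ))), sq_nonneg (-(u 0 - (2278100/148853 : ℝ)) - (1/2)*(u 1 - (1051680/148853 : ℝ))), sq_nonneg (-2*(u 0 - (2278100/148853 : ℝ)) - (u 1 - (1051680/148853 : ℝ)) - (1/2)*(u 2 - (482560/148853 : ℝ))), sq_nonneg (-4*(u 0 - (2278100/148853 : ℝ)) - 2*(u 1 - (1051680/148853 : ℝ)) - (u 2 - (482560/148853 : ℝ)) - (1/2)*(u 3 - (215040/148853 : ℝ))), sq_nonneg (-8*(u 0 - (2278100/148853 : ℝ)) - 4*(u 1 - (1051680/148853 : ℝ)) - 2*(u 2 - (482560/148853 : ℝ)) - (u 3 - (215040/148853 : ℝ)) - (1/2)*(u 4 - (81920/148853 : ℝ))), sq_nonneg (u 0 - (2278100/148853 : ℝ)), sq_nonneg (u 1 - (1051680/148853 : ℝ)), sq_nonneg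 (u 2 - (482560/148853 : ℝ)), sq_nonneg (u 3 - (215040/148853 : ℝ)), sq_nonneg (u 4 - (81920/148853 : ℝ)), sq_nonneg (u 5 - (0 : ℝ))]

lemma Ca (ustar : ℝ × ℝ × ℝ × ℝ → Fin 6 → ℝ) (h : ustar ((1:ℝ), (1:ℝ), (2:ℝ), (-0.5:ℝ)) = ua) :
    Ccl ustar ((1:ℝ), (1:ℝ), (2:ℝ), (-0.5:ℝ)) = (12817495558950/22157215609 : ℝ) := by
  simp only [Ccl, xcl, Fin.sum_univ_six, fm0, fm1, fm2, fm3, fm4, fm5, h, uae0, uae1, uae2, uae3, uae4, uae5]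
  norm_num

noncomputable def um : Fin 6 → ℝ := ![(123858300/7989659 : ℝ), (55191360/7989659 : ℝ), (24468480/7989659 : ℝ), (10567680/7989659 : ℝ), (3932160/7989659 : ℝ), (0 : ℝ)]

lemma ume0 : um 0 = (123858300/7989659 : ℝ) := rfl
lemma ume1 : um 1 = (55191360/7989659 : ℝ) := rfl
lemma ume2 : um 2 = (24468480/7989659 : ℝ) := rfl
lemma ume3 : um 3 = (10567680/7989659 : ℝ) := rfl
lemma ume4 : um 4 = (3932160/7989659 : ℝ) := rfl
lemma ume5 : um 5 = (0 : ℝ) := rfl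

lemma keym (u : Fin 6 → ℝ) :
    Jhat ((3/2 : ℝ), (1:ℝ), (2:ℝ), (-0.5:ℝ)) u = (5553556425/15979318 : ℝ) + ((3/2 : ℝ)*((-(1/2)*(u 0 - (123858300/7989659 : ℝ)))^2 + (-(u 0 - (123858300/7989659 : ℝ)) - (1/2)*(u 1 - (55191360/7989659 : ℝ)))^2 + (-2*(u 0 - (123858300/7989659 : ℝ)) - (u 1 - (55191360/7989659 : ℝ)) - (1/2)*(u 2 - (24468480/7989659 : ℝ)))^2 + (-4*(u 0 - (123858300/7989659 : ℝ)) - 2*(u 1 - (55191360/7989659 : ℝ)) - (u 2 - (24468480/7989659 : ℝ)) - (1/2)*(u 3 - (10567680/7989659 : ℝ)))^2 + (-8*(u 0 - (123858300/7989659 : ℝ)) - 4*(u 1 - (55191360/7989659 : ℝ)) - 2*(u 2 - (24468480/7989659 : ℝ)) - (u 3 - (10567680/7989659 : ℝ)) - (1/2)*(u 4 - (3932160/7989659 : ℝ)))^2) + ((u 0 - (123858300/7989659 : ℝ))^2 + (u 1 - (55191360/7989659 : ℝ))^2 + (u 2 - (24468480/7989659 : ℝ))^2 + (u 3 - (10567680/7989659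 : ℝ))^2 + (u 4 - (3932160/7989659 : ℝ))^2 + (u 5 - (0 : ℝ))^2)) := by
  simp only [Jhat, xhat, Fin.sum_univ_six, fm0, fm1, fm2, fm3, fm4, fm5]
  norm_num
  ring

lemma minm : ∀ u : Fin 6 → ℝ, Jhat ((3/2 : ℝ), (1:ℝ), (2:ℝ), (-0.5:ℝ)) um ≤ Jhat ((3/2 : ℝ), (1:ℝ), (2:ℝ), (-0.5:ℝ)) u := by
  have hX : Jhat ((3/2 : ℝ), (1:ℝ), (2:ℝ), (-0.5:ℝ)) um = (5553556425/15979318 : ℝ) := by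
    rw [keym]
    norm_num [ume0, ume1, ume2, ume3, ume4, ume5]
  intro u
  rw [hX, keym u]
  nlinarith [sq_nonneg (-(1/2)*(u 0 - (123858300/7989659 : ℝ))), sq_nonneg (-(u 0 - (123858300/7989659 : ℝ)) - (1/2)*(u 1 - (55191360/7989659 : ℝ))), sq_nonneg (-2*(u 0 - (123858300/7989659 : ℝ)) - (u 1 - (55191360/7989659 : ℝ)) - (1/2)*(u 2 - (24468480/7989659 : ℝ))), sq_nonneg (-4*(u 0 - (123858300/7989659 : ℝ)) - 2*(u 1 - (55191360/7989659 : ℝ)) - (u 2 - (24468480/7989659 : ℝ)) - (1/2)*(u 3 - (10567680/7989659 : ℝ))), sq_nonneg (-8*(u 0 - (123858300/7989659 : ℝ)) - 4*(u 1 - (55191360/7989659 : ℝ)) - 2*(u 2 - (24468480/7989659 : ℝ)) - (u 3 - (10567680/7989659 : ℝ)) - (1/2)*(u 4 - (3932160/7989659 : ℝ))), sq_nonneg (u 0 - (123858300/7989659 : ℝ)), sq_nonneg (u 1 - (55191360/7989659 : ℝ)), sq_nonneg (u 2 - (24468480/7989659 : ℝ)), sq_nonneg (u 3 - (10567680/7989659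 : ℝ)), sq_nonneg (u 4 - (3932160/7989659 : ℝ)), sq_nonneg (u 5 - (0 : ℝ))]

lemma Cm (ustar : ℝ × ℝ × ℝ × ℝ → Fin 6 → ℝ) (h : ustar ((3/2 : ℝ), (1:ℝ), (2:ℝ), (-0.5:ℝ)) = um) :
    Ccl ustar ((3/2 : ℝ), (1:ℝ), (2:ℝ), (-0.5:ℝ)) = (36741304898424150/63834650936281 : ℝ) := by
  simp only [Ccl, xcl, Fin.sum_univ_six, fm0, fm1, fm2, fm3, fm4, fm5, h, ume0, ume1, ume2, ume3, ume4, ume5]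
  norm_num

noncomputable def ub : Fin 6 → ℝ := ![(181780/11603 : ℝ), (78320/11603 : ℝ), (33600/11603 : ℝ), (14080/11603 : ℝ), (5120/11603 : ℝ), (0 : ℝ)]

lemma ube0 : ub 0 = (181780/11603 : ℝ) := rfl
lemma ube1 : ub 1 = (78320/11603 : ℝ) := rfl
lemma ube2 : ub 2 = (33600/11603 : ℝ) := rfl
lemma ube3 : ub 3 = (14080/11603 : ℝ) := rfl
lemma ube4 : ub 4 = (5120/11603 : ℝ) := rfl
lemma ube5 : ub 5 = (0 : ℝ) := rfl

lemma keyb (u : Fin 6 → ℝ) :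
    Jhat ((2:ℝ), (1:ℝ), (2:ℝ), (-0.5:ℝ)) u = (4215750/11603 : ℝ) + ((2 : ℝ)*((-(1/2)*(u 0 - (181780/11603 : ℝ)))^2 + (-(u 0 - (181780/11603 : ℝ)) - (1/2)*(u 1 - (78320/11603 : ℝ)))^2 + (-2*(u 0 - (181780/11603 : ℝ)) - (u 1 - (78320/11603 : ℝ)) - (1/2)*(u 2 - (33600/11603 : ℝ)))^2 + (-4*(u 0 - (181780/11603 : ℝ)) - 2*(u 1 - (78320/11603 : ℝ)) - (u 2 - (33600/11603 : ℝ)) - (1/2)*(u 3 - (14080/11603 : ℝ)))^2 + (-8*(u 0 - (181780/11603 : ℝ)) - 4*(u 1 - (78320/11603 : ℝ)) - 2*(u 2 - (33600/11603 : ℝ)) - (u 3 - (14080/11603 : ℝ)) - (1/2)*(u 4 - (5120/11603 : ℝ)))^2) + ((u 0 - (181780/11603 : ℝ))^2 + (u 1 - (78320/11603 : ℝ))^2 + (u 2 - (33600/11603 : ℝ))^2 + (u 3 - (14080/11603 : ℝ))^2 + (u 4 - (5120/11603 : ℝ))^2 + (u 5 - (0 : ℝ))^2)) := by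
  simp only [Jhat, xhat, Fin.sum_univ_six, fm0, fm1, fm2, fm3, fm4, fm5]
  norm_num
  ring

lemma minb : ∀ u : Fin 6 → ℝ, Jhat ((2:ℝ), (1:ℝ), (2:ℝ), (-0.5:ℝ)) ub ≤ Jhat ((2:ℝ), (1:ℝ), (2:ℝ), (-0.5:ℝ)) u := by
  have hX : Jhat ((2:ℝ), (1:ℝ), (2:ℝ), (-0.5:ℝ)) ub = (4215750/11603 : ℝ) := by
    rw [keyb]
    norm_num [ube0, ube1, ube2, ube3, ube4, ube5]
  intro u
  rw [hX, keyb u]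
  nlinarith [sq_nonneg (-(1/2)*(u 0 - (181780/11603 : ℝ))), sq_nonneg (-(u 0 - (181780/11603 : ℝ)) - (1/2)*(u 1 - (78320/11603 : ℝ))), sq_nonneg (-2*(u 0 - (181780/11603 : ℝ)) - (u 1 - (78320/11603 : ℝ)) - (1/2)*(u 2 - (33600/11603 : ℝ))), sq_nonneg (-4*(u 0 - (181780/11603 : ℝ)) - 2*(u 1 - (78320/11603 : ℝ)) - (u 2 - (33600/11603 : ℝ)) - (1/2)*(u 3 - (14080/11603 : ℝ))), sq_nonneg (-8*(u 0 - (181780/11603 : ℝ)) - 4*(u 1 - (78320/11603 : ℝ)) - 2*(u 2 - (33600/11603 : ℝ)) - (u 3 - (14080/11603 : ℝ)) - (1/2)*(u 4 - (5120/11603 : ℝ))), sq_nonneg (u 0 - (181780/11603 : ℝ)), sq_nonneg (u 1 - (78320/11603 : ℝ)), sq_nonneg (u 2 - (33600/11603 : ℝ)), sq_nonneg (u 3 - (14080/11603 : ℝ)), sq_nonneg (u 4 - (5120/11603 : ℝ)), sq_nonneg (u 5 - (0 : ℝ))]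

lemma Cb (ustar : ℝ × ℝ × ℝ × ℝ → Fin 6 → ℝ) (h : ustar ((2:ℝ), (1:ℝ), (2:ℝ), (-0.5:ℝ)) = ub) :
    Ccl ustar ((2:ℝ), (1:ℝ), (2:ℝ), (-0.5:ℝ)) = (76940080750/134629609 : ℝ) := by
  simp only [Ccl, xcl, Fin.sum_univ_six, fm0, fm1, fm2, fm3, fm4, fm5, h, ube0, ube1, ube2, ube3, ube4, ube5]
  norm_num


lemma xhat_cont (θ : ℝ × ℝ × ℝ × ℝ) (n : ℕ) :
    Continuous fun u : Fin 6 → ℝ => xhat θ u n := by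
  induction n with
  | zero => simpa [xhat] using continuous_const
  | succ i ih =>
    have hd : Continuous fun u : Fin 6 → ℝ =>
        (if h : i < 6 then u ⟨i, h⟩ else 0 : ℝ) := by
      by_cases h : i < 6
      · simpa [h] using continuous_apply (⟨i, h⟩ : Fin 6)
      · simpa [h] using (continuous_const : Continuous fun _ : Fin 6 → ℝ => (0:ℝ))
    simp only [xhat]
    exact (continuous_const.mul ih).add (continuous_const.mul hd)

lemma Jhat_cont (θ : ℝ × ℝ × ℝ × ℝ) : Continuous (Jhat θ) := by
  refine continuous_finset_sum _ fun i _ => ?_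
  exact (continuous_const.mul ((xhat_cont θ i).pow 2)).add
    (continuous_const.mul ((continuous_apply i).pow 2))

lemma Jhat_coercive (θ : ℝ × ℝ × ℝ × ℝ) (h1 : 0 ≤ θ.1) (u : Fin 6 → ℝ) :
    θ.2.1 * ‖u‖ ^ 2 ≤ Jhat θ u ∨ θ.2.1 ≤ 0 := by
  rcases le_or_gt θ.2.1 0 with h | h2
  · exact Or.inr h
  refine Or.inl ?_
  have hsum : ‖u‖ ^ 2 ≤ ∑ i : Fin 6, u i ^ 2 := by
    have hnn : 0 ≤ ∑ i : Fin 6, u i ^ 2 := Finset.sum_nonneg fun i _ => sq_nonneg _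
    have hs : ‖u‖ ≤ Real.sqrt (∑ i : Fin 6, u i ^ 2) := by
      refine (pi_norm_le_iff_of_nonneg (Real.sqrt_nonneg _)).mpr fun i => ?_
      rw [Real.norm_eq_abs, ← Real.sqrt_sq_eq_abs]
      exact Real.sqrt_le_sqrt (Finset.single_le_sum (fun j _ => sq_nonneg (u j))
        (Finset.mem_univ i))
    calc ‖u‖ ^ 2 ≤ Real.sqrt (∑ i : Fin 6, u i ^ 2) ^ 2 :=
          pow_le_pow_left₀ (norm_nonneg u) hs 2
      _ = ∑ i : Fin 6, u i ^ 2 := Real.sq_sqrt hnn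
  calc θ.2.1 * ‖u‖ ^ 2 ≤ θ.2.1 * ∑ i : Fin 6, u i ^ 2 :=
        mul_le_mul_of_nonneg_left hsum h2.le
    _ = ∑ i : Fin 6, θ.2.1 * u i ^ 2 := Finset.mul_sum _ _ _
    _ ≤ Jhat θ u := Finset.sum_le_sum fun i _ => by
        have := mul_nonneg h1 (sq_nonneg (xhat θ u i)); nlinarith [mul_nonneg h1 (sq_nonneg (xhat θ u ↑i))]

lemma xhat_mid (θ : ℝ × ℝ × ℝ × ℝ) (u v : Fin 6 → ℝ) (n : ℕ) :
    xhat θ (fun i => (u i + v i) / 2) n = (xhat θ u n + xhat θ v n) / 2 := by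
  induction n with
  | zero => norm_num [xhat]
  | succ i ih =>
    by_cases h : i < 6 <;> simp [xhat, ih, h] <;> ring

lemma minimizers_eq (θ : ℝ × ℝ × ℝ × ℝ) (h1 : 0 ≤ θ.1) (h2 : 0 < θ.2.1)
    {u v : Fin 6 → ℝ} (hu : ∀ w, Jhat θ u ≤ Jhat θ w)
    (hv : ∀ w, Jhat θ v ≤ Jhat θ w) : u = v := by
  have key : Jhat θ u + Jhat θ v - 2 * Jhat θ (fun i => (u i + v i) / 2)
      = (∑ i : Fin 6, θ.1 * (xhat θ u i - xhat θ v i) ^ 2 / 2)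
        + ∑ i : Fin 6, θ.2.1 * (u i - v i) ^ 2 / 2 := by
    simp only [Jhat, Fin.sum_univ_six, xhat_mid]
    ring
  have hA : 0 ≤ ∑ i : Fin 6, θ.1 * (xhat θ u i - xhat θ v i) ^ 2 / 2 :=
    Finset.sum_nonneg fun i _ => by positivity
  have huv : Jhat θ u = Jhat θ v := le_antisymm (hu v) (hv u)
  have hw := hu fun i => (u i + v i) / 2
  have hz : ∑ i : Fin 6, θ.2.1 * (u i - v i) ^ 2 / 2 ≤ 0 := by linarith
  have hz' := (Finset.sum_eq_zero_iff_of_nonneg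
      (fun (i : Fin 6) _ => by positivity)).mp
    (le_antisymm hz (Finset.sum_nonneg fun i _ => by positivity))
  funext i
  have hi := hz' i (Finset.mem_univ i)
  have h5 : (u i - v i) ^ 2 = 0 := by
    rcases mul_eq_zero.mp (by linarith : θ.2.1 * (u i - v i) ^ 2 = 0) with h | h
    · exact absurd h h2.ne'
    · exact h
  have := pow_eq_zero_iff (n := 2) (by norm_num) |>.mp h5
  linarith

lemma exists_min (θ : ℝ × ℝ × ℝ × ℝ) (h1 : 0 ≤ θ.1) (h2 : 0 < θ.2.1) :
    ∃ u0 : Fin 6 → ℝ, ∀ u : Fin 6 → ℝ, Jhat θ u0 ≤ Jhat θ u := by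
  have hb : ∀ u : Fin 6 → ℝ, θ.2.1 * ‖u‖ ^ 2 ≤ Jhat θ u := fun u => by
    rcases Jhat_coercive θ h1 u with h | h
    · exact h
    · linarith
  have ht : Filter.Tendsto (Jhat θ) (Filter.cocompact _) Filter.atTop := by
    refine Filter.tendsto_atTop_mono hb ?_
    have hx : Filter.Tendsto (fun x : ℝ => θ.2.1 * x ^ 2) Filter.atTop Filter.atTop :=
      (Filter.tendsto_pow_atTop (two_ne_zero)).const_mul_atTop h2
    exact hx.comp tendsto_norm_cocompact_atTop
  exact (Jhat_cont θ).exists_forall_le ht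
/-- Non-convexity example (Appendix C.1): for `θ₁ ≥ 0, θ₂ > 0` the
inner problem has a unique global minimizer `û*(θ)`, and the closed-loop cost `C` violates
the convexity inequality at `θ⁽¹⁾ = (1,1,2,−0.5)`, `θ⁽²⁾ = (2,1,2,−0.5)`, `α = 1/2`;
in particular `C` is not convex. -/
theorem closed_loop_cost_nonconvex :
    (∀ θ : ℝ × ℝ × ℝ × ℝ, 0 ≤ θ.1 → 0 < θ.2.1 →
      ∃! u0 : Fin 6 → ℝ, ∀ u : Fin 6 → ℝ, Jhat θ u0 ≤ Jhat θ u) ∧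
    ∀ ustar : ℝ × ℝ × ℝ × ℝ → Fin 6 → ℝ,
      (∀ θ : ℝ × ℝ × ℝ × ℝ, 0 ≤ θ.1 → 0 < θ.2.1 →
        ∀ u : Fin 6 → ℝ, Jhat θ (ustar θ) ≤ Jhat θ u) →
      Ccl ustar (((1 : ℝ) / 2) • ((1 : ℝ), (1 : ℝ), (2 : ℝ), (-0.5 : ℝ)) +
          (1 - (1 : ℝ) / 2) • ((2 : ℝ), (1 : ℝ), (2 : ℝ), (-0.5 : ℝ))) >
        (1 : ℝ) / 2 * Ccl ustar (1, 1, 2, -0.5) +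
          (1 - (1 : ℝ) / 2) * Ccl ustar (2, 1, 2, -0.5) ∧
      ¬ ConvexOn ℝ Set.univ (Ccl ustar) := by
  constructor
  · intro θ h1 h2
    obtain ⟨u0, hu0⟩ := exists_min θ h1 h2
    exact ⟨u0, hu0, fun v hv => minimizers_eq θ h1 h2 hv hu0⟩
  · intro ustar hstar
    have ha : ustar ((1:ℝ), (1:ℝ), (2:ℝ), (-0.5:ℝ)) = ua :=
      minimizers_eq _ (by norm_num) (by norm_num)
        (hstar _ (by norm_num) (by norm_num)) mina
    have hb : ustar ((2:ℝ), (1:ℝ), (2:ℝ), (-0.5:ℝ)) = ub :=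
      minimizers_eq _ (by norm_num) (by norm_num)
        (hstar _ (by norm_num) (by norm_num)) minb
    have hm : ustar ((3/2 : ℝ), (1:ℝ), (2:ℝ), (-0.5:ℝ)) = um :=
      minimizers_eq _ (by norm_num) (by norm_num)
        (hstar _ (by norm_num) (by norm_num)) minm
    have hmid : ((1 : ℝ) / 2) • ((1 : ℝ), (1 : ℝ), (2 : ℝ), (-0.5 : ℝ)) +
        (1 - (1 : ℝ) / 2) • ((2 : ℝ), (1 : ℝ), (2 : ℝ), (-0.5 : ℝ))
        = ((3/2 : ℝ), (1:ℝ), (2:ℝ), (-0.5:ℝ)) := by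
      norm_num [Prod.ext_iff]
    have e1 := Ca ustar ha
    have e2 := Cb ustar hb
    have e3 := Cm ustar hm
    have hgt : Ccl ustar (((1 : ℝ) / 2) • ((1 : ℝ), (1 : ℝ), (2 : ℝ), (-0.5 : ℝ)) +
          (1 - (1 : ℝ) / 2) • ((2 : ℝ), (1 : ℝ), (2 : ℝ), (-0.5 : ℝ))) >
        (1 : ℝ) / 2 * Ccl ustar (1, 1, 2, -0.5) +
          (1 - (1 : ℝ) / 2) * Ccl ustar (2, 1, 2, -0.5) := by
      rw [hmid, e3, e1, e2]
      norm_num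
    refine ⟨hgt, fun hc => ?_⟩
    have hle := hc.2 (Set.mem_univ ((1:ℝ), (1:ℝ), (2:ℝ), (-0.5:ℝ)))
      (Set.mem_univ ((2:ℝ), (1:ℝ), (2:ℝ), (-0.5:ℝ)))
      (by norm_num : (0:ℝ) ≤ 1/2) (by norm_num : (0:ℝ) ≤ 1 - 1/2) (by norm_num)
    simp only [smul_eq_mul] at hle
    linarith
end
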